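/- arXiv:2112.06708 — 2 statements merged into one kernel-verified Lean document; each statement's English description precedes it below -/
import Mathlib

section
/- Suppose W is a solution associated to (h_EZ, U) and there exists t₀ ≥ 0 such that U_t = 0 for all t < t₀. Let A ∈ F_{t₀} and define Ũ_t := E[1_A | F_t]·U_t. Then the process W̃ defined by W̃_t := E[1_A·W_{t∨t₀} | F_t] is a solution associated to (h_EZ, Ũ). -/
open MeasureTheory Filter Set Real Topology ENNReal

noncomputable section

variable {Ω : Type*} {mΩ : MeasurableSpace Ω}

/-- A right-continuous adapted real-valued process is progressively measurable. -/
theorem adapted_progMeasurable_of_rightContinuous {F : Filtration ℝ mΩ} {X : ℝ → Ω → ℝ}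
    (hX : Adapted F X) (hrc : ∀ ω t, ContinuousWithinAt (fun s => X s ω) (Set.Ici t) t) :
    ProgMeasurable F X := by
  intro i
  have main : ∀ n : ℕ, StronglyMeasurable[Subtype.instMeasurableSpace.prod (F i)]
      (fun p : Set.Iic i × Ω => X (min i (((⌊(p.1 : ℝ) * 2 ^ n⌋ : ℝ) + 1) / 2 ^ n)) p.2) := by
    intro n
    have h2 : @Measurable (Ω × ℤ) ℝ ((F i).prod Int.instMeasurableSpace) _
        (fun q : Ω × ℤ => X (min i (((q.2 : ℝ) + 1) / 2 ^ n)) q.1) := by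
      apply measurable_from_prod_countable_left
      intro k
      exact (hX (min i (((k : ℝ) + 1) / 2 ^ n))).mono (F.mono (min_le_left _ _)) le_rfl
    have hsnd : @Measurable (Set.Iic i × Ω) Ω (Subtype.instMeasurableSpace.prod (F i)) (F i)
        Prod.snd := measurable_snd
    have hfl : @Measurable (Set.Iic i × Ω) ℤ (Subtype.instMeasurableSpace.prod (F i))
        Int.instMeasurableSpace (fun p => ⌊(p.1 : ℝ) * 2 ^ n⌋) := by
      have hcoe : @Measurable (Set.Iic i × Ω) ℝ (Subtype.instMeasurableSpace.prod (F i)) _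
          (fun p => (p.1 : ℝ) * 2 ^ n) := (measurable_subtype_coe.comp measurable_fst).mul_const _
      exact Int.measurable_floor.comp hcoe
    have h1 : @Measurable (Set.Iic i × Ω) (Ω × ℤ) (Subtype.instMeasurableSpace.prod (F i))
        ((F i).prod Int.instMeasurableSpace) (fun p => (p.2, ⌊(p.1 : ℝ) * 2 ^ n⌋)) :=
      Measurable.prodMk hsnd hfl
    exact (h2.comp h1).stronglyMeasurable
  refine stronglyMeasurable_of_tendsto atTop main (tendsto_pi_nhds.2 fun p => ?_)
  have h1 : ∀ n : ℕ, (p.1 : ℝ) ≤ min i (((⌊(p.1 : ℝ) * 2 ^ n⌋ : ℝ) + 1) / 2 ^ n) := by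
    intro n
    refine le_min p.1.2 ?_
    rw [le_div_iff₀ (by positivity)]
    exact (Int.lt_floor_add_one _).le
  have h2 : ∀ n : ℕ, min i (((⌊(p.1 : ℝ) * 2 ^ n⌋ : ℝ) + 1) / 2 ^ n) ≤ (p.1 : ℝ) + (1 / 2) ^ n := by
    intro n
    refine (min_le_right _ _).trans ?_
    rw [div_le_iff₀ (by positivity)]
    have h0 := Int.floor_le ((p.1 : ℝ) * 2 ^ n)
    have h2n : (0:ℝ) < 2 ^ n := by positivity
    have heq : ((p.1 : ℝ) + (1/2)^n) * 2 ^ n = (p.1 : ℝ) * 2 ^ n + 1 := by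
      rw [add_mul, ← mul_pow]; norm_num
    rw [heq]
    linarith
  have htend : Tendsto (fun n : ℕ => min i (((⌊(p.1 : ℝ) * 2 ^ n⌋ : ℝ) + 1) / 2 ^ n)) atTop
      (𝓝[Set.Ici (p.1 : ℝ)] (p.1 : ℝ)) := by
    refine tendsto_nhdsWithin_of_tendsto_nhds_of_eventually_within _ ?_
      (Eventually.of_forall fun n => h1 n)
    have hlim : Tendsto (fun n : ℕ => (p.1 : ℝ) + (1 / 2 : ℝ) ^ n) atTop (𝓝 ((p.1:ℝ) + 0)) :=
      tendsto_const_nhds.add (tendsto_pow_atTop_nhds_zero_of_lt_one (by norm_num) (by norm_num))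
    rw [add_zero] at hlim
    exact tendsto_of_tendsto_of_tendsto_of_le_of_le tendsto_const_nhds hlim h1 h2
  exact (hrc p.2 p.1).tendsto.comp htend

/-- A progressively measurable process is jointly strongly measurable. -/
theorem ProgMeasurable.stronglyMeasurable_uncurry' {F : Filtration ℝ mΩ} {X : ℝ → Ω → ℝ}
    (hX : ProgMeasurable F X) : StronglyMeasurable (fun p : ℝ × Ω => X p.1 p.2) := by
  refine stronglyMeasurable_of_tendsto atTop
    (f := fun n (p : ℝ × Ω) => X (min p.1 n) p.2) (fun n => ?_) (tendsto_pi_nhds.2 fun p => ?_)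
  · have h := hX (n : ℝ)
    have hm : @Measurable (ℝ × Ω) (Set.Iic (n:ℝ) × Ω) _
        (Subtype.instMeasurableSpace.prod (F (n:ℝ)))
        (fun p => (⟨min p.1 n, Set.mem_Iic.2 (min_le_right _ _)⟩, p.2)) := by
      refine Measurable.prodMk ((measurable_fst.min measurable_const).subtype_mk) ?_
      exact measurable_snd.mono le_rfl (F.le _)
    exact h.comp_measurable hm
  · refine tendsto_atTop_of_eventually_const (i₀ := ⌈|p.1|⌉₊) fun n hn => ?_
    have h2 : (⌈|p.1|⌉₊ : ℕ) ≤ n := hn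
    have h1 : p.1 ≤ (n : ℝ) :=
      (le_abs_self _).trans ((Nat.le_ceil _).trans (by exact_mod_cast h2))
    rw [min_eq_left h1]


/-- An alternating chain for `g` (below `a`, above `b`, alternating, increasing) of
length `k` inside `S`. -/
def AltChain (g : ℚ → ℝ) (S : Set ℚ) (a b : ℝ) (k : ℕ) : Prop :=
  ∃ u v : Fin k → ℚ, (∀ i, u i ∈ S) ∧ (∀ i, v i ∈ S) ∧ (∀ i, u i < v i) ∧
    (∀ i j : Fin k, i < j → v i < u j) ∧ (∀ i, g (u i) < a) ∧ (∀ i, b < g (v i))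

theorem AltChain.mono {g : ℚ → ℝ} {S S' : Set ℚ} {a b : ℝ} {k : ℕ}
    (h : AltChain g S a b k) (hSS : S ⊆ S') : AltChain g S' a b k := by
  obtain ⟨u, v, h1, h2, h3, h4, h5, h6⟩ := h
  exact ⟨u, v, fun i => hSS (h1 i), fun i => hSS (h2 i), h3, h4, h5, h6⟩

theorem le_upcrossingsBefore_of_altchain {a b : ℝ} (hab : a < b) (f : ℕ → Ω → ℝ) (ω : Ω)
    {k : ℕ} (I J : Fin k → ℕ) (hIJ : ∀ i, I i < J i)
    (hJI : ∀ i j : Fin k, i < j → J i < I j)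
    (ha : ∀ i, f (I i) ω < a) (hb : ∀ i, b < f (J i) ω) :
    ∀ n : ℕ, ∀ hn : n < k, n + 1 ≤ upcrossingsBefore a b f (J ⟨n, hn⟩ + 1) ω := by
  intro n
  induction n with
  | zero =>
    intro hn
    have h0 := upcrossingsBefore_lt_of_exists_upcrossing (f := f) (ω := ω) hab
      (N := 0) (N₁ := I ⟨0, hn⟩) (Nat.zero_le _) (ha _) (hIJ _).le (hb _)
    simp [upcrossingsBefore_zero] at h0; omega
  | succ n ih =>
    intro hn
    have hn' : n < k := by omega
    have hlt : (⟨n, hn'⟩ : Fin k) < ⟨n + 1, hn⟩ := Fin.mk_lt_mk.2 (Nat.lt_succ_self n)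
    have step := upcrossingsBefore_lt_of_exists_upcrossing (f := f) (ω := ω) hab
      (N := J ⟨n, hn'⟩ + 1) (N₁ := I ⟨n + 1, hn⟩) (hJI _ _ hlt) (ha _) (hIJ _).le (hb _)
    have := ih hn'
    omega

/-- Doob-type bound for the probability of an alternating chain of length `k` inside a
finite set of rationals, for the martingale `q ↦ μ[ξ | F q]`. -/
theorem meas_altChain_le (μ : Measure Ω) [IsProbabilityMeasure μ] (F : Filtration ℝ mΩ)
    (ξ : Ω → ℝ) (hξ : Integrable ξ μ) {a b : ℝ} (hab : a < b)
    (Q : Finset ℚ) (hQ : Q.Nonempty) {k : ℕ} (hk : k ≠ 0) :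
    μ {ω | AltChain (fun q => (μ[ξ|F (q : ℝ)]) ω) (↑Q : Set ℚ) a b k} ≤
      ENNReal.ofReal (∫ ω, |ξ ω| ∂μ + |a|) / ENNReal.ofReal (b - a) / k := by
  classical
  set m := Q.card with hmdef
  have hm : 0 < m := Finset.card_pos.2 hQ
  set iso := Q.orderIsoOfFin rfl with hiso
  set σ : ℕ → ℚ := fun j => (iso ⟨min j (m - 1), by omega⟩ : ℚ) with hσ
  have hσmono : Monotone σ := by
    intro i j hij
    have h1 : (⟨min i (m - 1), by omega⟩ : Fin m) ≤ ⟨min j (m - 1), by omega⟩ := by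
      rw [Fin.le_iff_val_le_val]; simp only; omega
    exact Subtype.coe_le_coe.2 (iso.monotone h1)
  set 𝒢 : Filtration ℕ mΩ :=
    ⟨fun j => F ((σ j : ℚ) : ℝ), fun i j hij => F.mono (by exact_mod_cast hσmono hij),
      fun j => F.le _⟩ with h𝒢
  set f : ℕ → Ω → ℝ := fun j => μ[ξ|F ((σ j : ℚ) : ℝ)] with hf
  have hmart : Martingale f 𝒢 μ := by
    constructor
    · exact fun j => stronglyMeasurable_condExp
    · intro i j hij
      exact condExp_condExp_of_le (F.mono (by exact_mod_cast hσmono hij)) (F.le _)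
  have hsub := hmart.submartingale
  -- bound on the expected number of upcrossings
  set K := ∫ ω, |ξ ω| ∂μ + |a| with hK
  have hNbd : ∀ N, ∫⁻ ω, ENNReal.ofReal ((f N ω - a)⁺) ∂μ ≤ ENNReal.ofReal K := by
    intro N
    have hint : Integrable (fun ω => |f N ω| + |a|) μ :=
      (integrable_condExp.abs).add (integrable_const _)
    have hle : ∀ ω, (f N ω - a)⁺ ≤ |f N ω| + |a| := by
      intro ω
      have h1 : (f N ω - a)⁺ = max (f N ω - a) 0 := rfl
      rw [h1]
      refine max_le ?_ (by positivity)
      have := abs_sub (f N ω) a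
      calc f N ω - a ≤ |f N ω - a| := le_abs_self _
        _ ≤ |f N ω| + |a| := abs_sub _ _
    calc ∫⁻ ω, ENNReal.ofReal ((f N ω - a)⁺) ∂μ
        ≤ ∫⁻ ω, ENNReal.ofReal (|f N ω| + |a|) ∂μ :=
          lintegral_mono fun ω => ENNReal.ofReal_le_ofReal (hle ω)
      _ = ENNReal.ofReal (∫ ω, (|f N ω| + |a|) ∂μ) :=
          (ofReal_integral_eq_lintegral_ofReal hint
            (Eventually.of_forall fun ω => by positivity)).symm
      _ ≤ ENNReal.ofReal K := by
          refine ENNReal.ofReal_le_ofReal ?_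
          rw [integral_add (integrable_condExp.abs) (integrable_const _), integral_const]
          simp only [measure_univ, ENNReal.toReal_one, smul_eq_mul, one_mul, probReal_univ]
          have := integral_abs_condExp_le (μ := μ) (m := F ((σ N : ℚ) : ℝ)) ξ
          rw [hK]
          linarith
  have hup : ∫⁻ ω, upcrossings a b f ω ∂μ ≤ ENNReal.ofReal K / ENNReal.ofReal (b - a) := by
    rw [ENNReal.le_div_iff_mul_le (Or.inl (ENNReal.ofReal_pos.2 (sub_pos.2 hab)).ne')
      (Or.inl ENNReal.ofReal_ne_top)]
    rw [mul_comm]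
    exact (hsub.mul_lintegral_upcrossings_le_lintegral_pos_part a b).trans (iSup_le hNbd)
  have hmeas : Measurable (upcrossings a b f) := hsub.stronglyAdapted.measurable_upcrossings hab
  have markov : μ {ω | (k : ℝ≥0∞) ≤ upcrossings a b f ω} ≤
      ENNReal.ofReal K / ENNReal.ofReal (b - a) / k := by
    refine le_trans (meas_ge_le_lintegral_div hmeas.aemeasurable ?_ ?_) ?_
    · exact_mod_cast hk
    · exact ENNReal.natCast_ne_top k
    · exact ENNReal.div_le_div_right hup _
  refine le_trans (measure_mono ?_) markov
  intro ω hω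
  obtain ⟨u, v, hu, hv, huv, hvu, hua, hvb⟩ := hω
  -- indices
  have humem : ∀ i, u i ∈ Q := fun i => hu i
  have hvmem : ∀ i, v i ∈ Q := fun i => hv i
  have hσsymm : ∀ (q : ℚ) (hq : q ∈ Q), σ ((iso.symm ⟨q, hq⟩ : Fin m) : ℕ) = q := by
    intro q hq
    have h2 : ((iso.symm ⟨q, hq⟩ : Fin m) : ℕ) < m := (iso.symm ⟨q, hq⟩).isLt
    have h1 : (⟨min ((iso.symm ⟨q, hq⟩ : Fin m) : ℕ) (m - 1), by omega⟩ : Fin m)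
        = iso.symm ⟨q, hq⟩ := by
      apply Fin.ext
      simp only
      omega
    rw [hσ]
    simp only [h1, OrderIso.apply_symm_apply]
  set I : Fin k → ℕ := fun i => ((iso.symm ⟨u i, humem i⟩ : Fin m) : ℕ) with hI
  set J : Fin k → ℕ := fun i => ((iso.symm ⟨v i, hvmem i⟩ : Fin m) : ℕ) with hJ
  have hσI : ∀ i, σ (I i) = u i := fun i => hσsymm (u i) (humem i)
  have hσJ : ∀ i, σ (J i) = v i := fun i => hσsymm (v i) (hvmem i)
  have hIJ : ∀ i, I i < J i := by
    intro i
    have : (iso.symm ⟨u i, humem i⟩) < iso.symm ⟨v i, hvmem i⟩ :=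
      iso.symm.strictMono (Subtype.mk_lt_mk.2 (huv i))
    exact this
  have hJI : ∀ i j : Fin k, i < j → J i < I j := by
    intro i j hij
    have : (iso.symm ⟨v i, hvmem i⟩) < iso.symm ⟨u j, humem j⟩ :=
      iso.symm.strictMono (Subtype.mk_lt_mk.2 (hvu i j hij))
    exact this
  have hfa : ∀ i, f (I i) ω < a := by
    intro i; rw [hf]; simp only [hσI i]; exact hua i
  have hfb : ∀ i, b < f (J i) ω := by
    intro i; rw [hf]; simp only [hσJ i]; exact hvb i
  have hmain := le_upcrossingsBefore_of_altchain hab f ω I J hIJ hJI hfa hfb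
    (k - 1) (by omega)
  have hk1 : k - 1 + 1 = k := by omega
  rw [hk1] at hmain
  show (k : ℝ≥0∞) ≤ upcrossings a b f ω
  calc (k : ℝ≥0∞) ≤ (upcrossingsBefore a b f (J ⟨k - 1, by omega⟩ + 1) ω : ℝ≥0∞) := by
        exact_mod_cast hmain
    _ ≤ upcrossings a b f ω := le_iSup (fun N => (upcrossingsBefore a b f N ω : ℝ≥0∞)) _

/-- The set of `ω` admitting alternating chains of every length in a countable set `S` of
rationals is null, for the martingale `q ↦ μ[ξ | F q]`. -/
theorem altChain_null (μ : Measure Ω) [IsProbabilityMeasure μ] (F : Filtration ℝ mΩ)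
    (ξ : Ω → ℝ) (hξ : Integrable ξ μ) (S : Set ℚ) {a b : ℝ} (hab : a < b) :
    μ {ω | ∀ k : ℕ, AltChain (fun q => (μ[ξ|F (q : ℝ)]) ω) S a b k} = 0 := by
  classical
  obtain ⟨e, he⟩ := exists_surjective_nat ℚ
  set Q : ℕ → Finset ℚ := fun n => insert 0 ((Finset.range n).image e) with hQ
  have hQmono : Monotone Q := fun i j hij =>
    Finset.insert_subset_insert _ (Finset.image_subset_image (Finset.range_subset_range.2 hij))
  set g : Ω → ℚ → ℝ := fun ω q => (μ[ξ|F (q : ℝ)]) ω with hg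
  set Bad := {ω | ∀ k : ℕ, AltChain (g ω) S a b k} with hBad
  have key : ∀ k : ℕ, μ Bad ≤ ENNReal.ofReal (∫ ω, |ξ ω| ∂μ + |a|) / ENNReal.ofReal (b - a)
      / (k + 1 : ℕ) := by
    intro k
    set C : ℕ → Set Ω := fun n => {ω | AltChain (g ω) (↑(Q n) : Set ℚ) a b (k + 1)} with hC
    have hCmono : Monotone C := by
      intro i j hij ω hω
      exact hω.mono (by exact_mod_cast hQmono hij)
    have hsub : Bad ⊆ ⋃ n, C n := by
      intro ω hω
      obtain ⟨u, v, hu, hv, huv, hvu, hua, hvb⟩ := hω (k + 1)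
      set n := (Finset.univ.sup fun i : Fin (k + 1) => max (he (u i)).choose (he (v i)).choose) + 1
        with hn
      have hmemu : ∀ i, u i ∈ Q n := by
        intro i
        refine Finset.mem_insert_of_mem (Finset.mem_image.2 ⟨(he (u i)).choose, ?_, (he (u i)).choose_spec⟩)
        refine Finset.mem_range.2 ?_
        have : (he (u i)).choose ≤ Finset.univ.sup fun i : Fin (k + 1) =>
            max (he (u i)).choose (he (v i)).choose :=
          le_trans (le_max_left _ _) (Finset.le_sup (f := fun i : Fin (k + 1) =>
            max (he (u i)).choose (he (v i)).choose) (Finset.mem_univ i))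
        omega
      have hmemv : ∀ i, v i ∈ Q n := by
        intro i
        refine Finset.mem_insert_of_mem (Finset.mem_image.2 ⟨(he (v i)).choose, ?_, (he (v i)).choose_spec⟩)
        refine Finset.mem_range.2 ?_
        have : (he (v i)).choose ≤ Finset.univ.sup fun i : Fin (k + 1) =>
            max (he (u i)).choose (he (v i)).choose :=
          le_trans (le_max_right _ _) (Finset.le_sup (f := fun i : Fin (k + 1) =>
            max (he (u i)).choose (he (v i)).choose) (Finset.mem_univ i))
        omega
      exact Set.mem_iUnion.2 ⟨n, u, v, hmemu, hmemv, huv, hvu, hua, hvb⟩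
    have hcont : μ (⋃ n, C n) = ⨆ n, μ (C n) := hCmono.measure_iUnion
    refine le_trans (measure_mono hsub) ?_
    rw [hcont]
    refine iSup_le fun n => ?_
    have := meas_altChain_le μ F ξ hξ hab (Q n) ⟨0, Finset.mem_insert_self _ _⟩
      (k := k + 1) (by omega)
    exact_mod_cast this
  -- conclude
  by_contra h0
  have hpos : μ Bad ≠ 0 := h0
  set C₀ := ENNReal.ofReal (∫ ω, |ξ ω| ∂μ + |a|) / ENNReal.ofReal (b - a) with hC₀
  have hC₀top : C₀ ≠ ⊤ := by
    rw [hC₀]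
    exact (ENNReal.div_lt_top ENNReal.ofReal_ne_top
      (ENNReal.ofReal_pos.2 (sub_pos.2 hab)).ne').ne
  have hmul : ∀ k : ℕ, μ Bad * (k + 1 : ℕ) ≤ C₀ := by
    intro k
    have := key k
    rwa [ENNReal.le_div_iff_mul_le (Or.inl (by exact_mod_cast Nat.succ_ne_zero k))
      (Or.inl (ENNReal.natCast_ne_top _))] at this
  have htop : (⊤ : ℝ≥0∞) ≤ C₀ := by
    have h1 : (⊤ : ℝ≥0∞) = μ Bad * ⨆ k : ℕ, ((k + 1 : ℕ) : ℝ≥0∞) := by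
      have h2 : (⨆ k : ℕ, ((k + 1 : ℕ) : ℝ≥0∞)) = ⊤ := by
        rw [eq_top_iff, ← ENNReal.iSup_natCast]
        exact iSup_le fun n => le_trans (by exact_mod_cast Nat.le_succ n)
          (le_iSup (fun k : ℕ => ((k + 1 : ℕ) : ℝ≥0∞)) n)
      rw [h2, ENNReal.mul_top hpos]
    rw [h1, ENNReal.mul_iSup]
    exact iSup_le fun k => hmul k
  exact hC₀top (top_le_iff.1 htop)


/-- The filter of rationals approaching `t` from the right. -/
def rQ (t : ℝ) : Filter ℚ := Filter.comap (fun q : ℚ => (q : ℝ)) (𝓝[>] t)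

/-- The filter of rationals approaching `t` from the left. -/
def lQ (t : ℝ) : Filter ℚ := Filter.comap (fun q : ℚ => (q : ℝ)) (𝓝[<] t)

instance rQ_neBot (t : ℝ) : (rQ t).NeBot := by
  refine Filter.comap_neBot fun U hU => ?_
  obtain ⟨u, hu, hsub⟩ := mem_nhdsGT_iff_exists_Ioo_subset.1 hU
  obtain ⟨q, hq1, hq2⟩ := exists_rat_btwn (show t < u from hu)
  exact ⟨q, hsub ⟨hq1, hq2⟩⟩

instance lQ_neBot (t : ℝ) : (lQ t).NeBot := by
  refine Filter.comap_neBot fun U hU => ?_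
  obtain ⟨u, hu, hsub⟩ := mem_nhdsLT_iff_exists_Ioo_subset.1 hU
  obtain ⟨q, hq1, hq2⟩ := exists_rat_btwn (show u < t from hu)
  exact ⟨q, hsub ⟨hq1, hq2⟩⟩

theorem eventually_rQ_mem {t u : ℝ} (h : t < u) : ∀ᶠ q : ℚ in rQ t, (q : ℝ) ∈ Set.Ioo t u := by
  have h1 : Set.Ioo t u ∈ 𝓝[>] t := Ioo_mem_nhdsGT_of_mem ⟨le_rfl, h⟩
  exact Filter.eventually_of_mem (Filter.preimage_mem_comap h1) fun _ hq => hq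

theorem eventually_lQ_mem {t u : ℝ} (h : u < t) : ∀ᶠ q : ℚ in lQ t, (q : ℝ) ∈ Set.Ioo u t := by
  have h1 : Set.Ioo u t ∈ 𝓝[<] t := Ioo_mem_nhdsLT_of_mem ⟨h, le_rfl⟩
  exact Filter.eventually_of_mem (Filter.preimage_mem_comap h1) fun _ hq => hq

section Chains

variable {g : ℚ → ℝ} {S : Set ℚ} {a b : ℝ}

/-- Oscillation from the right at `t` produces alternating chains of every length. -/
theorem altChain_of_osc_right {t t₀ : ℝ} (htt : t < t₀)
    (hS : ∀ q : ℚ, t < (q : ℝ) → (q : ℝ) < t₀ → q ∈ S)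
    (hfa : ∀ β : ℝ, t < β → ∃ q : ℚ, t < (q : ℝ) ∧ (q : ℝ) < β ∧ g q < a)
    (hfb : ∀ β : ℝ, t < β → ∃ q : ℚ, t < (q : ℝ) ∧ (q : ℝ) < β ∧ b < g q) :
    ∀ k, AltChain g S a b k := by
  have pick : ∀ β : ℝ, t < β → ∃ p : ℚ × ℚ, t < (p.1 : ℝ) ∧ p.1 < p.2 ∧ ((p.2 : ℚ) : ℝ) < β ∧
      g p.1 < a ∧ b < g p.2 := by
    intro β hβ
    obtain ⟨qv, hv1, hv2, hv3⟩ := hfb β hβ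
    obtain ⟨qu, hu1, hu2, hu3⟩ := hfa (qv : ℝ) hv1
    exact ⟨(qu, qv), hu1, by exact_mod_cast hu2, hv2, hu3, hv3⟩
  set T := {p : ℚ × ℚ // t < (p.1 : ℝ) ∧ p.1 < p.2 ∧ g p.1 < a ∧ b < g p.2} with hT
  have step : ∀ β : ℝ, t < β → ∃ p : T, ((p : ℚ × ℚ).2 : ℝ) < β := by
    intro β hβ
    obtain ⟨p, h1, h2, h3, h4, h5⟩ := pick β hβ
    exact ⟨⟨p, h1, h2, h4, h5⟩, h3⟩
  set c : ℕ → T := fun n => Nat.rec ((step t₀ htt).choose)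
    (fun _ prev => (step ((prev : ℚ × ℚ).1 : ℝ) prev.2.1).choose) n with hc
  have hc0 : (((c 0 : T) : ℚ × ℚ).2 : ℝ) < t₀ := (step t₀ htt).choose_spec
  have hcsucc : ∀ n, (((c (n + 1) : T) : ℚ × ℚ).2 : ℝ) < (((c n : T) : ℚ × ℚ).1 : ℝ) :=
    fun n => (step (((c n : T) : ℚ × ℚ).1 : ℝ) (c n).2.1).choose_spec
  -- descending property
  have hdesc : ∀ m n : ℕ, m < n → ((c n : T) : ℚ × ℚ).2 < ((c m : T) : ℚ × ℚ).1 := by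
    intro m n hmn
    induction n with
    | zero => omega
    | succ n ih =>
      rcases Nat.lt_succ_iff_lt_or_eq.1 hmn with h | h
      · have h1 := ih h
        have h2 := hcsucc n
        have h3 := (c n).2.2.1
        have h2' : ((c (n+1) : T) : ℚ × ℚ).2 < ((c n : T) : ℚ × ℚ).1 := by exact_mod_cast h2
        exact lt_trans (lt_trans h2' h3) h1
      · rw [h]
        exact_mod_cast hcsucc n
  have hlt_t₀ : ∀ n, (((c n : T) : ℚ × ℚ).2 : ℝ) < t₀ := by
    intro n
    cases n with
    | zero => exact hc0
    | succ n =>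
      have h1 := hdesc 0 (n + 1) (by omega)
      have h2 := (c 0).2.2.1
      have : ((c (n+1) : T) : ℚ × ℚ).2 < ((c 0 : T) : ℚ × ℚ).2 := lt_trans h1 h2
      exact lt_trans (by exact_mod_cast this) hc0
  intro k
  refine ⟨fun i => ((c (k - 1 - (i : ℕ)) : T) : ℚ × ℚ).1,
    fun i => ((c (k - 1 - (i : ℕ)) : T) : ℚ × ℚ).2, ?_, ?_, ?_, ?_, ?_, ?_⟩
  · intro i
    refine hS _ (c _).2.1 ?_
    have h1 := (c (k - 1 - (i : ℕ))).2.2.1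
    exact lt_trans (by exact_mod_cast h1) (hlt_t₀ _)
  · intro i
    refine hS _ ?_ (hlt_t₀ _)
    have h1 := (c (k - 1 - (i : ℕ))).2.1
    have h2 := (c (k - 1 - (i : ℕ))).2.2.1
    exact lt_trans h1 (by exact_mod_cast h2)
  · exact fun i => (c _).2.2.1
  · intro i j hij
    refine hdesc _ _ ?_
    have hi := i.isLt
    have hj := j.isLt
    have : (i : ℕ) < (j : ℕ) := hij
    omega
  · exact fun i => (c _).2.2.2.1
  · exact fun i => (c _).2.2.2.2

/-- Oscillation from the left at `t` produces alternating chains of every length. -/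
theorem altChain_of_osc_left {t : ℝ} (ht : 0 < t)
    (hS : ∀ q : ℚ, 0 ≤ (q : ℝ) → (q : ℝ) < t → q ∈ S)
    (hfa : ∀ α : ℝ, α < t → ∃ q : ℚ, α < (q : ℝ) ∧ (q : ℝ) < t ∧ g q < a)
    (hfb : ∀ α : ℝ, α < t → ∃ q : ℚ, α < (q : ℝ) ∧ (q : ℝ) < t ∧ b < g q) :
    ∀ k, AltChain g S a b k := by
  have pick : ∀ α : ℝ, α < t → ∃ p : ℚ × ℚ, α < (p.1 : ℝ) ∧ p.1 < p.2 ∧ ((p.2 : ℚ) : ℝ) < t ∧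
      g p.1 < a ∧ b < g p.2 := by
    intro α hα
    obtain ⟨qu, hu1, hu2, hu3⟩ := hfa α hα
    obtain ⟨qv, hv1, hv2, hv3⟩ := hfb (qu : ℝ) hu2
    exact ⟨(qu, qv), hu1, by exact_mod_cast hv1, hv2, hu3, hv3⟩
  set T := {p : ℚ × ℚ // 0 ≤ (p.1 : ℝ) ∧ p.1 < p.2 ∧ ((p.2 : ℚ) : ℝ) < t ∧ g p.1 < a ∧ b < g p.2}
    with hT
  have step : ∀ α : ℝ, 0 ≤ α → α < t → ∃ p : T, α < ((p : ℚ × ℚ).1 : ℝ) := by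
    intro α hα0 hα
    obtain ⟨p, h1, h2, h3, h4, h5⟩ := pick α hα
    exact ⟨⟨p, le_trans hα0 h1.le, h2, h3, h4, h5⟩, h1⟩
  have h00 : (0 : ℝ) < t := ht
  set c : ℕ → T := fun n => Nat.rec ((step 0 le_rfl h00).choose)
    (fun _ prev => (step ((prev : ℚ × ℚ).2 : ℝ)
      (le_trans (prev.2.1) (by exact_mod_cast prev.2.2.1.le)) prev.2.2.2.1).choose) n with hc
  have hcsucc : ∀ n, (((c n : T) : ℚ × ℚ).2 : ℝ) < (((c (n + 1) : T) : ℚ × ℚ).1 : ℝ) :=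
    fun n => (step (((c n : T) : ℚ × ℚ).2 : ℝ)
      (le_trans ((c n).2.1) (by exact_mod_cast (c n).2.2.1.le)) (c n).2.2.2.1).choose_spec
  have hasc : ∀ m n : ℕ, m < n → ((c m : T) : ℚ × ℚ).2 < ((c n : T) : ℚ × ℚ).1 := by
    intro m n hmn
    induction n with
    | zero => omega
    | succ n ih =>
      rcases Nat.lt_succ_iff_lt_or_eq.1 hmn with h | h
      · have h1 := ih h
        have h2 := hcsucc n
        have h3 := (c n).2.2.1
        have h2' : ((c n : T) : ℚ × ℚ).2 < ((c (n+1) : T) : ℚ × ℚ).1 := by exact_mod_cast h2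
        exact lt_trans (lt_trans h1 h3) h2'
      · rw [h]
        exact_mod_cast hcsucc n
  intro k
  refine ⟨fun i => ((c (i : ℕ) : T) : ℚ × ℚ).1, fun i => ((c (i : ℕ) : T) : ℚ × ℚ).2,
    ?_, ?_, ?_, ?_, ?_, ?_⟩
  · intro i
    refine hS _ (c _).2.1 ?_
    have h1 := (c (i : ℕ)).2.2.1
    exact lt_trans (by exact_mod_cast h1) (c (i : ℕ)).2.2.2.1
  · intro i
    refine hS _ ?_ (c (i : ℕ)).2.2.2.1
    have h0 := (c (i : ℕ)).2.1
    have h1 := (c (i : ℕ)).2.2.1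
    exact le_trans h0 (by exact_mod_cast h1.le)
  · exact fun i => (c _).2.2.1
  · intro i j hij
    exact hasc _ _ hij
  · exact fun i => (c _).2.2.2.2.1
  · exact fun i => (c _).2.2.2.2.2

/-- Existence of right limits along rationals, given no oscillation and boundedness. -/
theorem exists_rlim {t₀ t : ℝ} (htt : t < t₀)
    (hS : ∀ q : ℚ, t < (q : ℝ) → (q : ℝ) < t₀ → q ∈ S)
    (hnn : ∀ᶠ q in rQ t, 0 ≤ g q) (hbd : ∃ C, ∀ᶠ q in rQ t, g q ≤ C)
    (hnochain : ∀ a b : ℚ, a < b → ∃ k, ¬AltChain g S (a : ℝ) (b : ℝ) k) :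
    ∃ c : ℝ, Tendsto g (rQ t) (𝓝 c) := by
  obtain ⟨C, hC⟩ := hbd
  have hbdd1 : IsBoundedUnder (· ≤ ·) (rQ t) g := ⟨C, Filter.eventually_map.2 hC⟩
  have hbdd2 : IsBoundedUnder (· ≥ ·) (rQ t) g := ⟨0, Filter.eventually_map.2 hnn⟩
  by_cases heq : liminf g (rQ t) = limsup g (rQ t)
  · exact ⟨limsup g (rQ t), tendsto_of_liminf_eq_limsup heq rfl hbdd1 hbdd2⟩
  · exfalso
    have hlt : liminf g (rQ t) < limsup g (rQ t) :=
      lt_of_le_of_ne (liminf_le_limsup hbdd1 hbdd2) heq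
    obtain ⟨a, ha1, ha2⟩ := exists_rat_btwn hlt
    obtain ⟨b, hb1, hb2⟩ := exists_rat_btwn ha2
    have hfa : ∃ᶠ q in rQ t, g q < (a : ℝ) := frequently_lt_of_liminf_lt hbdd1.isCoboundedUnder_ge ha1
    have hfb : ∃ᶠ q in rQ t, (b : ℝ) < g q := frequently_lt_of_lt_limsup hbdd2.isCoboundedUnder_le hb2
    have hfa' : ∀ β : ℝ, t < β → ∃ q : ℚ, t < (q : ℝ) ∧ (q : ℝ) < β ∧ g q < (a : ℝ) := by
      intro β hβ
      obtain ⟨q, hq1, hq2⟩ := (hfa.and_eventually (eventually_rQ_mem hβ)).exists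
      exact ⟨q, hq2.1, hq2.2, hq1⟩
    have hfb' : ∀ β : ℝ, t < β → ∃ q : ℚ, t < (q : ℝ) ∧ (q : ℝ) < β ∧ (b : ℝ) < g q := by
      intro β hβ
      obtain ⟨q, hq1, hq2⟩ := (hfb.and_eventually (eventually_rQ_mem hβ)).exists
      exact ⟨q, hq2.1, hq2.2, hq1⟩
    obtain ⟨k, hk⟩ := hnochain a b (by exact_mod_cast hb1)
    exact hk (altChain_of_osc_right htt hS hfa' hfb' k)

/-- Existence of left limits along rationals. -/
theorem exists_llim {t : ℝ} (ht : 0 < t)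
    (hS : ∀ q : ℚ, 0 ≤ (q : ℝ) → (q : ℝ) < t → q ∈ S)
    (hnn : ∀ᶠ q in lQ t, 0 ≤ g q) (hbd : ∃ C, ∀ᶠ q in lQ t, g q ≤ C)
    (hnochain : ∀ a b : ℚ, a < b → ∃ k, ¬AltChain g S (a : ℝ) (b : ℝ) k) :
    ∃ c : ℝ, Tendsto g (lQ t) (𝓝 c) := by
  obtain ⟨C, hC⟩ := hbd
  have hbdd1 : IsBoundedUnder (· ≤ ·) (lQ t) g := ⟨C, Filter.eventually_map.2 hC⟩
  have hbdd2 : IsBoundedUnder (· ≥ ·) (lQ t) g := ⟨0, Filter.eventually_map.2 hnn⟩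
  by_cases heq : liminf g (lQ t) = limsup g (lQ t)
  · exact ⟨limsup g (lQ t), tendsto_of_liminf_eq_limsup heq rfl hbdd1 hbdd2⟩
  · exfalso
    have hlt : liminf g (lQ t) < limsup g (lQ t) :=
      lt_of_le_of_ne (liminf_le_limsup hbdd1 hbdd2) heq
    obtain ⟨a, ha1, ha2⟩ := exists_rat_btwn hlt
    obtain ⟨b, hb1, hb2⟩ := exists_rat_btwn ha2
    have hfa : ∃ᶠ q in lQ t, g q < (a : ℝ) := frequently_lt_of_liminf_lt hbdd1.isCoboundedUnder_ge ha1
    have hfb : ∃ᶠ q in lQ t, (b : ℝ) < g q := frequently_lt_of_lt_limsup hbdd2.isCoboundedUnder_le hb2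
    have hfa' : ∀ α : ℝ, α < t → ∃ q : ℚ, α < (q : ℝ) ∧ (q : ℝ) < t ∧ g q < (a : ℝ) := by
      intro α hα
      obtain ⟨q, hq1, hq2⟩ := (hfa.and_eventually (eventually_lQ_mem hα)).exists
      exact ⟨q, hq2.1, hq2.2, hq1⟩
    have hfb' : ∀ α : ℝ, α < t → ∃ q : ℚ, α < (q : ℝ) ∧ (q : ℝ) < t ∧ (b : ℝ) < g q := by
      intro α hα
      obtain ⟨q, hq1, hq2⟩ := (hfb.and_eventually (eventually_lQ_mem hα)).exists
      exact ⟨q, hq2.1, hq2.2, hq1⟩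
    obtain ⟨k, hk⟩ := hnochain a b (by exact_mod_cast hb1)
    exact hk (altChain_of_osc_left ht hS hfa' hfb' k)

end Chains

section Reg

variable {g : ℚ → ℝ} {h : ℝ → ℝ} {t₀ : ℝ}

/-- Right-continuity of the regularized function. -/
theorem reg_right (hlim : ∀ s, 0 ≤ s → s < t₀ → Tendsto g (rQ s) (𝓝 (h s)))
    {t : ℝ} (ht : 0 ≤ t) (htt : t < t₀) {ε : ℝ} (hε : 0 < ε) :
    ∃ δ : ℝ, 0 < δ ∧ t + δ ≤ t₀ ∧ ∀ s, t ≤ s → s < t + δ → |h s - h t| ≤ ε := by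
  have h1 := hlim t ht htt
  have h2 : ∀ᶠ q in rQ t, |g q - h t| ≤ ε / 2 := by
    filter_upwards [Metric.tendsto_nhds.1 h1 (ε / 2) (by positivity)] with q hq
    rw [Real.dist_eq] at hq
    exact hq.le
  rw [rQ, Filter.eventually_comap] at h2
  obtain ⟨u, hu, hsub⟩ := mem_nhdsGT_iff_exists_Ioo_subset.1 h2
  have hu' : t < u := hu
  refine ⟨min (u - t) (t₀ - t), lt_min (sub_pos.2 hu') (sub_pos.2 htt), ?_, ?_⟩
  · have := min_le_right (u - t) (t₀ - t)
    linarith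
  intro s hs1 hs2
  rcases eq_or_lt_of_le hs1 with rfl | hs1'
  · simp only [sub_self, abs_zero]
    exact hε.le
  · have hst₀ : s < t₀ := by
      have := min_le_right (u - t) (t₀ - t)
      linarith
    have hsu : s < u := by
      have := min_le_left (u - t) (t₀ - t)
      linarith
    have h3 := hlim s (ht.trans hs1) hst₀
    have hev : ∀ᶠ q in rQ s, |g q - h t| ≤ ε / 2 := by
      filter_upwards [eventually_rQ_mem hsu] with q hq
      exact hsub ⟨lt_trans hs1' hq.1, hq.2⟩ q rfl
    have h4 : |h s - h t| ≤ ε / 2 :=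
      le_of_tendsto ((h3.sub_const _).abs) hev
    linarith

/-- Behaviour of the regularized function to the left of `t`. -/
theorem reg_left (hlim : ∀ s, 0 ≤ s → s < t₀ → Tendsto g (rQ s) (𝓝 (h s)))
    {t : ℝ} (ht : 0 < t) (htt : t ≤ t₀) {L : ℝ} (hL : Tendsto g (lQ t) (𝓝 L))
    {ε : ℝ} (hε : 0 < ε) :
    ∃ δ : ℝ, 0 < δ ∧ δ ≤ t ∧ ∀ s, t - δ < s → s < t → |h s - L| ≤ ε := by
  have h2 : ∀ᶠ q in lQ t, |g q - L| ≤ ε / 2 := by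
    filter_upwards [Metric.tendsto_nhds.1 hL (ε / 2) (by positivity)] with q hq
    rw [Real.dist_eq] at hq
    exact hq.le
  rw [lQ, Filter.eventually_comap] at h2
  obtain ⟨l', hl', hsub⟩ := mem_nhdsLT_iff_exists_Ioo_subset.1 h2
  have hl'' : l' < t := hl'
  refine ⟨min (t - l') t, lt_min (sub_pos.2 hl'') ht, min_le_right _ _, ?_⟩
  intro s hs1 hs2
  have hs0 : 0 ≤ s := by
    have := min_le_right (t - l') t
    linarith
  have hsl' : l' < s := by
    have := min_le_left (t - l') t
    linarith
  have h3 := hlim s hs0 (lt_of_lt_of_le hs2 htt)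
  have hev : ∀ᶠ q in rQ s, |g q - L| ≤ ε / 2 := by
    filter_upwards [eventually_rQ_mem hs2] with q hq
    exact hsub ⟨lt_trans hsl' hq.1, hq.2⟩ q rfl
  have h4 : |h s - L| ≤ ε / 2 := le_of_tendsto ((h3.sub_const _).abs) hev
  linarith

end Reg


section RegMain

variable {Ω : Type*} {mΩ : MeasurableSpace Ω}

/-- Doob regularization: a càdlàg-on-`[0,t₀)` version of the martingale `t ↦ E[ξ | F t]`. -/
theorem reg_main (μ : Measure Ω) [IsProbabilityMeasure μ] (F : Filtration ℝ mΩ)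
    (hcomplete : ∀ s : Set Ω, μ s = 0 → ∀ t : ℝ, MeasurableSet[F t] s)
    (hrightcts : ∀ t : ℝ,
      (F t : MeasurableSpace Ω) = ⨅ s ∈ Set.Ioi t, (F s : MeasurableSpace Ω))
    (t₀ : ℝ) (ξ ξc : Ω → ℝ) (hξ : Integrable ξ μ) (hξc : Integrable ξc μ)
    (hξ0 : ∀ ω, 0 ≤ ξ ω) (hξc0 : ∀ ω, 0 ≤ ξc ω)
    (W : ℝ → Ω → ℝ)
    (hWmart : ∀ t : ℝ, 0 ≤ t → t ≤ t₀ → W t =ᵐ[μ] μ[fun ω => ξ ω + ξc ω|F t])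
    (hWrc : ∀ ω, ∀ t : ℝ, 0 ≤ t → ContinuousWithinAt (fun s => W s ω) (Set.Ici t) t)
    (hWll : ∀ ω, ∀ t : ℝ, 0 < t → ∃ l, Tendsto (fun s => W s ω) (𝓝[<] t) (𝓝 l)) :
    ∃ N : ℝ → Ω → ℝ,
      (∀ t ω, 0 ≤ N t ω) ∧
      (∀ t : ℝ, StronglyMeasurable[F t] (N t)) ∧
      (∀ t : ℝ, 0 ≤ t → t < t₀ → N t =ᵐ[μ] μ[ξ|F t]) ∧
      (∀ ω, ∀ t : ℝ, 0 ≤ t → t < t₀ → ∀ ε : ℝ, 0 < ε → ∃ δ : ℝ, 0 < δ ∧ t + δ ≤ t₀ ∧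
        ∀ s, t ≤ s → s < t + δ → |N s ω - N t ω| ≤ ε) ∧
      (∀ ω, ∀ t : ℝ, 0 < t → t ≤ t₀ → ∃ L : ℝ, ∀ ε : ℝ, 0 < ε → ∃ δ : ℝ, 0 < δ ∧ δ ≤ t ∧
        ∀ s, t - δ < s → s < t → |N s ω - L| ≤ ε) ∧
      (∀ t : ℝ, ¬(0 ≤ t ∧ t < t₀) → ∀ ω, N t ω = 0) := by
  classical
  set S : Set ℚ := {q : ℚ | 0 ≤ (q : ℝ) ∧ (q : ℝ) < t₀} with hS
  set M : ℚ → Ω → ℝ := fun q => μ[ξ|F (q : ℝ)] with hM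
  set Mc : ℚ → Ω → ℝ := fun q => μ[ξc|F (q : ℝ)] with hMc
  set P : Ω → Prop := fun ω =>
    (∀ q : ℚ, q ∈ S → (0 ≤ M q ω ∧ 0 ≤ Mc q ω ∧ M q ω + Mc q ω = W (q : ℝ) ω)) ∧
    (∀ a b : ℚ, a < b → ∃ k, ¬AltChain (fun q => M q ω) S (a : ℝ) (b : ℝ) k) with hP
  have hPae : ∀ᵐ ω ∂μ, P ω := by
    have h1 : ∀ᵐ ω ∂μ, ∀ q : ℚ, q ∈ S →
        (0 ≤ M q ω ∧ 0 ≤ Mc q ω ∧ M q ω + Mc q ω = W (q : ℝ) ω) := by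
      rw [ae_all_iff]
      intro q
      by_cases hq : q ∈ S
      · have e1 : 0 ≤ᵐ[μ] M q := condExp_nonneg (Eventually.of_forall hξ0)
        have e2 : 0 ≤ᵐ[μ] Mc q := condExp_nonneg (Eventually.of_forall hξc0)
        have e3 : M q + Mc q =ᵐ[μ] W (q : ℝ) := by
          have h4 : μ[fun ω => ξ ω + ξc ω|F (q : ℝ)] =ᵐ[μ] M q + Mc q := condExp_add hξ hξc _
          exact (h4.symm.trans (hWmart (q : ℝ) hq.1 hq.2.le).symm)
        filter_upwards [e1, e2, e3] with ω h1 h2 h3 _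
        exact ⟨h1, h2, h3⟩
      · exact Eventually.of_forall fun ω h => absurd h hq
    have h2 : ∀ᵐ ω ∂μ, ∀ a b : ℚ, a < b →
        ∃ k, ¬AltChain (fun q => M q ω) S (a : ℝ) (b : ℝ) k := by
      rw [ae_all_iff]
      intro a
      rw [ae_all_iff]
      intro b
      by_cases hab : a < b
      · have h3 := altChain_null μ F ξ hξ S (show (a : ℝ) < (b : ℝ) by exact_mod_cast hab)
        have h4 : ∀ᵐ ω ∂μ, ω ∉ {ω | ∀ k : ℕ, AltChain (fun q => (μ[ξ|F (q : ℝ)]) ω) S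
            (a : ℝ) (b : ℝ) k} := measure_eq_zero_iff_ae_notMem.1 h3
        refine h4.mono fun ω hω _ => ?_
        exact not_forall.1 hω
      · exact Eventually.of_forall fun ω h => absurd h hab
    filter_upwards [h1, h2] with ω e1 e2
    exact ⟨e1, e2⟩
  set G : Set Ω := (toMeasurable μ {ω | ¬ P ω})ᶜ with hG
  have hBadnull : μ {ω | ¬ P ω} = 0 := ae_iff.1 hPae
  have hGnull : μ Gᶜ = 0 := by
    rw [hG, compl_compl, measure_toMeasurable]
    exact hBadnull
  have hGP : ∀ ω ∈ G, P ω := by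
    intro ω hω
    by_contra hc
    exact hω (subset_toMeasurable _ _ hc)
  have hGF : ∀ r : ℝ, MeasurableSet[F r] G := fun r =>
    (hcomplete _ (by rw [measure_toMeasurable]; exact hBadnull) r).compl
  have hGae : ∀ᵐ ω ∂μ, ω ∈ G := by
    have : μ Gᶜ = 0 := hGnull
    exact ae_iff.2 (by simpa [Set.compl_def] using this)
  -- existence of right limits on G
  have hGlim : ∀ ω ∈ G, ∀ t : ℝ, 0 ≤ t → t < t₀ →
      ∃ c, Tendsto (fun q => M q ω) (rQ t) (𝓝 c) := by
    intro ω hω t ht htt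
    obtain ⟨hPos, hChain⟩ := hGP ω hω
    refine exists_rlim (S := S) htt
      (fun q h1 h2 => show q ∈ S from ⟨le_trans ht h1.le, h2⟩) ?_ ?_ hChain
    · filter_upwards [eventually_rQ_mem htt] with q hq
      exact (hPos q ⟨le_trans ht hq.1.le, hq.2⟩).1
    · have hWt : Tendsto (fun q : ℚ => W (q : ℝ) ω) (rQ t) (𝓝 (W t ω)) := by
        have h1 : Tendsto (fun q : ℚ => (q : ℝ)) (rQ t) (𝓝[Set.Ici t] t) :=
          tendsto_comap.mono_right (nhdsWithin_mono _ Set.Ioi_subset_Ici_self)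
        exact (hWrc ω t ht).tendsto.comp h1
      refine ⟨W t ω + 1, ?_⟩
      have hev2 : ∀ᶠ q : ℚ in rQ t, W (q : ℝ) ω < W t ω + 1 :=
        hWt.eventually_lt_const (by linarith)
      filter_upwards [hev2, eventually_rQ_mem htt] with q h1 hq2
      have h5 := hPos q ⟨le_trans ht hq2.1.le, hq2.2⟩
      linarith [h5.2.1, h5.2.2]
  set N : ℝ → Ω → ℝ := fun t ω =>
    if 0 ≤ t ∧ t < t₀ then G.indicator (fun ω' => limUnder (rQ t) (fun q => M q ω')) ω else 0
    with hN
  have hNzero : ∀ t ω, ω ∉ G → N t ω = 0 := by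
    intro t ω hω
    simp only [hN]
    split_ifs with h
    · exact Set.indicator_of_notMem hω _
    · rfl
  have hNtend : ∀ ω ∈ G, ∀ t : ℝ, 0 ≤ t → t < t₀ →
      Tendsto (fun q => M q ω) (rQ t) (𝓝 (N t ω)) := by
    intro ω hω t ht htt
    obtain ⟨c, hc⟩ := hGlim ω hω t ht htt
    have h1 : N t ω = c := by
      simp only [hN, if_pos (And.intro ht htt), Set.indicator_of_mem hω]
      exact hc.limUnder_eq
    rwa [h1]
  -- rational approximating sequences from the right
  have hseq : ∀ t : ℝ, t < t₀ → ∃ r : ℕ → ℚ,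
      (∀ n : ℕ, t < (r n : ℝ) ∧ (r n : ℝ) < t₀ ∧ (r n : ℝ) < t + 1 / ((n : ℝ) + 1)) ∧
      Tendsto (fun n : ℕ => ((r n : ℚ) : ℝ)) atTop (𝓝[>] t) := by
    intro t htt
    have hpick : ∀ n : ℕ, ∃ q : ℚ, t < (q : ℝ) ∧ (q : ℝ) < min t₀ (t + 1 / ((n : ℝ) + 1)) := by
      intro n
      refine exists_rat_btwn (lt_min htt ?_)
      have : (0 : ℝ) < 1 / ((n : ℝ) + 1) := by positivity
      linarith
    choose r hr1 hr2 using hpick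
    refine ⟨r, fun n => ⟨hr1 n, (lt_min_iff.1 (hr2 n)).1, (lt_min_iff.1 (hr2 n)).2⟩, ?_⟩
    refine tendsto_nhdsWithin_of_tendsto_nhds_of_eventually_within _ ?_
      (Eventually.of_forall fun n => hr1 n)
    have hup : ∀ n : ℕ, ((r n : ℝ)) ≤ t + 1 / ((n : ℝ) + 1) :=
      fun n => ((lt_min_iff.1 (hr2 n)).2).le
    have hlo : ∀ n : ℕ, t ≤ (r n : ℝ) := fun n => (hr1 n).le
    have hlim : Tendsto (fun n : ℕ => t + 1 / ((n : ℝ) + 1)) atTop (𝓝 (t + 0)) :=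
      tendsto_const_nhds.add tendsto_one_div_add_atTop_nhds_zero_nat
    rw [add_zero] at hlim
    exact tendsto_of_tendsto_of_tendsto_of_le_of_le tendsto_const_nhds hlim hlo hup
  -- strong measurability
  have hNmeas : ∀ t : ℝ, StronglyMeasurable[F t] (N t) := by
    intro t
    by_cases htt : 0 ≤ t ∧ t < t₀
    · obtain ⟨ht, htlt⟩ := htt
      obtain ⟨r, hr, hrt⟩ := hseq t htlt
      have hrtend : Tendsto (fun n => r n) atTop (rQ t) := by
        rw [rQ, Filter.tendsto_comap_iff]
        exact hrt
      have hcomp : ∀ ω, Tendsto (fun n => G.indicator (M (r n)) ω) atTop (𝓝 (N t ω)) := by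
        intro ω
        by_cases hω : ω ∈ G
        · have h1 := (hNtend ω hω t ht htlt).comp hrtend
          refine h1.congr fun n => ?_
          rw [Set.indicator_of_mem hω]
          rfl
        · have h2 : N t ω = 0 := hNzero t ω hω
          rw [h2]
          refine tendsto_const_nhds.congr fun n => ?_
          rw [Set.indicator_of_notMem hω]
      have hFu : ∀ u : ℝ, t < u → StronglyMeasurable[F u] (N t) := by
        intro u hu
        obtain ⟨n₀, hn₀⟩ : ∃ n₀ : ℕ, 1 / (u - t) < (n₀ : ℝ) := exists_nat_gt _
        have hbound : ∀ n : ℕ, ((r (n + n₀) : ℚ) : ℝ) ≤ u := by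
          intro n
          have h3 := (hr (n + n₀)).2.2
          have h4 : 1 / (((n + n₀ : ℕ) : ℝ) + 1) ≤ u - t := by
            have h5 : (0 : ℝ) < u - t := by linarith
            have h6 : 1 / (u - t) < ((n + n₀ : ℕ) : ℝ) + 1 := by
              have hnn : (n₀ : ℝ) ≤ ((n + n₀ : ℕ) : ℝ) := by
                push_cast
                linarith [Nat.cast_nonneg (α := ℝ) n]
              linarith
            rw [div_le_iff₀ (by positivity)]
            have h7 : (1 : ℝ) < (((n + n₀ : ℕ) : ℝ) + 1) * (u - t) := (div_lt_iff₀ h5).1 h6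
            nlinarith
          linarith
        have hFn : ∀ n : ℕ, StronglyMeasurable[F u] (G.indicator (M (r (n + n₀)))) := by
          intro n
          exact (stronglyMeasurable_condExp.mono (F.mono (hbound n))).indicator (hGF u)
        refine stronglyMeasurable_of_tendsto atTop hFn (tendsto_pi_nhds.2 fun ω => ?_)
        exact (hcomp ω).comp (tendsto_add_atTop_nat n₀)
      refine Measurable.stronglyMeasurable ?_
      intro s hs
      rw [hrightcts t]
      refine MeasurableSpace.measurableSet_iInf.2 fun u => ?_
      refine MeasurableSpace.measurableSet_iInf.2 fun hu => ?_
      exact (hFu u hu).measurable hs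
    · simp only [hN, if_neg htt]
      exact stronglyMeasurable_const
  -- nonnegativity
  have hNnn : ∀ t ω, 0 ≤ N t ω := by
    intro t ω
    by_cases hω : ω ∈ G
    · by_cases htt : 0 ≤ t ∧ t < t₀
      · refine ge_of_tendsto (hNtend ω hω t htt.1 htt.2) ?_
        filter_upwards [eventually_rQ_mem htt.2] with q hq
        exact ((hGP ω hω).1 q ⟨le_trans htt.1 hq.1.le, hq.2⟩).1
      · simp only [hN, if_neg htt]
        exact le_rfl
    · rw [hNzero t ω hω]
  -- value of N at points of G as limit along the chosen sequence, and modification property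
  have hNmod : ∀ t : ℝ, 0 ≤ t → t < t₀ → N t =ᵐ[μ] μ[ξ|F t] := by
    intro t ht htt
    obtain ⟨r, hr, hrt⟩ := hseq t htt
    have hrS : ∀ n, r n ∈ S := fun n => ⟨le_trans ht (hr n).1.le, (hr n).2.1⟩
    have hrtend : Tendsto (fun n => r n) atTop (rQ t) := by
      rw [rQ, Filter.tendsto_comap_iff]
      exact hrt
    have hMlim : ∀ ω ∈ G, Tendsto (fun n => M (r n) ω) atTop (𝓝 (N t ω)) :=
      fun ω hω => (hNtend ω hω t ht htt).comp hrtend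
    have hMclim : ∀ ω ∈ G, Tendsto (fun n => Mc (r n) ω) atTop (𝓝 (W t ω - N t ω)) := by
      intro ω hω
      have hWlim : Tendsto (fun n => W ((r n : ℚ) : ℝ) ω) atTop (𝓝 (W t ω)) := by
        have h1 : Tendsto (fun n => ((r n : ℚ) : ℝ)) atTop (𝓝[Set.Ici t] t) :=
          hrt.mono_right (nhdsWithin_mono _ Set.Ioi_subset_Ici_self)
        exact (hWrc ω t ht).tendsto.comp h1
      refine (hWlim.sub (hMlim ω hω)).congr fun n => ?_
      have h2 := ((hGP ω hω).1 (r n) (hrS n)).2.2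
      linarith
    have hNtmeas : Measurable (N t) := ((hNmeas t).mono (F.le t)).measurable
    have hWint : Integrable (W t) μ := (integrable_condExp).congr (hWmart t ht htt.le).symm
    have hWnn : 0 ≤ᵐ[μ] W t := by
      filter_upwards [hWmart t ht htt.le,
        condExp_nonneg (μ := μ) (m := F t) (f := fun ω => ξ ω + ξc ω)
          (Eventually.of_forall fun ω => add_nonneg (hξ0 ω) (hξc0 ω))] with ω h1 h2
      rw [h1]
      exact h2
    have hWNnn : ∀ᵐ ω ∂μ, 0 ≤ W t ω - N t ω := by
      filter_upwards [hGae] with ω hω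
      refine ge_of_tendsto (hMclim ω hω) (Eventually.of_forall fun n => ?_)
      exact ((hGP ω hω).1 (r n) (hrS n)).2.1
    -- Fatou inequalities on measurable sets of F t
    have key : ∀ B : Set Ω, MeasurableSet[F t] B →
        (∫⁻ ω in B, ENNReal.ofReal (N t ω) ∂μ ≤ ENNReal.ofReal (∫ ω in B, ξ ω ∂μ) ∧
          ∫⁻ ω in B, ENNReal.ofReal (W t ω - N t ω) ∂μ ≤
            ENNReal.ofReal (∫ ω in B, ξc ω ∂μ)) := by
      intro B hB
      have hBm : MeasurableSet B := F.le t _ hB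
      have hBr : ∀ n : ℕ, MeasurableSet[F ((r n : ℚ) : ℝ)] B :=
        fun n => F.mono (hr n).1.le _ hB
      constructor
      · have hf1 : ∫⁻ ω in B, ENNReal.ofReal (N t ω) ∂μ
            ≤ liminf (fun n => ∫⁻ ω in B, ENNReal.ofReal (M (r n) ω) ∂μ) atTop := by
          have hae : (fun ω => ENNReal.ofReal (N t ω)) =ᵐ[μ.restrict B]
              fun ω => liminf (fun n => ENNReal.ofReal (M (r n) ω)) atTop := by
            refine ae_restrict_of_ae ?_
            filter_upwards [hGae] with ω hω
            exact (((ENNReal.continuous_ofReal.tendsto _).comp (hMlim ω hω)).liminf_eq).symm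
          rw [lintegral_congr_ae hae]
          exact lintegral_liminf_le fun n =>
            ENNReal.measurable_ofReal.comp ((stronglyMeasurable_condExp.mono (F.le _)).measurable)
        refine hf1.trans ?_
        have heq : ∀ n : ℕ, ∫⁻ ω in B, ENNReal.ofReal (M (r n) ω) ∂μ
            = ENNReal.ofReal (∫ ω in B, ξ ω ∂μ) := by
          intro n
          rw [← ofReal_integral_eq_lintegral_ofReal (integrable_condExp.integrableOn)
            (ae_restrict_of_ae (condExp_nonneg (Eventually.of_forall hξ0)))]
          congr 1
          exact setIntegral_condExp (F.le _) hξ (hBr n)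
        simp only [heq]
        rw [liminf_const]
      · have hf1 : ∫⁻ ω in B, ENNReal.ofReal (W t ω - N t ω) ∂μ
            ≤ liminf (fun n => ∫⁻ ω in B, ENNReal.ofReal (Mc (r n) ω) ∂μ) atTop := by
          have hae : (fun ω => ENNReal.ofReal (W t ω - N t ω)) =ᵐ[μ.restrict B]
              fun ω => liminf (fun n => ENNReal.ofReal (Mc (r n) ω)) atTop := by
            refine ae_restrict_of_ae ?_
            filter_upwards [hGae] with ω hω
            exact (((ENNReal.continuous_ofReal.tendsto _).comp (hMclim ω hω)).liminf_eq).symm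
          rw [lintegral_congr_ae hae]
          exact lintegral_liminf_le fun n =>
            ENNReal.measurable_ofReal.comp ((stronglyMeasurable_condExp.mono (F.le _)).measurable)
        refine hf1.trans ?_
        have heq : ∀ n : ℕ, ∫⁻ ω in B, ENNReal.ofReal (Mc (r n) ω) ∂μ
            = ENNReal.ofReal (∫ ω in B, ξc ω ∂μ) := by
          intro n
          rw [← ofReal_integral_eq_lintegral_ofReal (integrable_condExp.integrableOn)
            (ae_restrict_of_ae (condExp_nonneg (Eventually.of_forall hξc0)))]
          congr 1
          exact setIntegral_condExp (F.le _) hξc (hBr n)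
        simp only [heq]
        rw [liminf_const]
    -- total masses agree
    have htotW : ∫⁻ ω, ENNReal.ofReal (N t ω) ∂μ + ∫⁻ ω, ENNReal.ofReal (W t ω - N t ω) ∂μ
        = ENNReal.ofReal (∫ ω, ξ ω ∂μ) + ENNReal.ofReal (∫ ω, ξc ω ∂μ) := by
      have hL : ∫⁻ ω, ENNReal.ofReal (N t ω) ∂μ + ∫⁻ ω, ENNReal.ofReal (W t ω - N t ω) ∂μ
          = ∫⁻ ω, ENNReal.ofReal (W t ω) ∂μ := by
        rw [← lintegral_add_left hNtmeas.ennreal_ofReal]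
        refine lintegral_congr_ae ?_
        filter_upwards [hWNnn] with ω h1
        rw [← ENNReal.ofReal_add (hNnn t ω) h1]
        congr 1
        ring
      have hR : ∫⁻ ω, ENNReal.ofReal (W t ω) ∂μ
          = ENNReal.ofReal (∫ ω, ξ ω ∂μ) + ENNReal.ofReal (∫ ω, ξc ω ∂μ) := by
        rw [← ofReal_integral_eq_lintegral_ofReal hWint hWnn,
          ← ENNReal.ofReal_add (integral_nonneg hξ0) (integral_nonneg hξc0)]
        congr 1
        have h5 : ∫ ω, W t ω ∂μ = ∫ ω, (ξ ω + ξc ω) ∂μ := by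
          rw [integral_congr_ae (hWmart t ht htt.le)]
          exact integral_condExp (F.le t)
        rw [h5, integral_add hξ hξc]
      rw [hL, hR]
    have hfinc : ENNReal.ofReal (∫ ω, ξc ω ∂μ) ≠ ⊤ := ENNReal.ofReal_ne_top
    have hkeyuniv := key Set.univ MeasurableSet.univ
    rw [Measure.restrict_univ] at hkeyuniv
    have htotN : ∫⁻ ω, ENNReal.ofReal (N t ω) ∂μ = ENNReal.ofReal (∫ ω, ξ ω ∂μ) := by
      refine le_antisymm hkeyuniv.1 ?_
      have h1 : ENNReal.ofReal (∫ ω, ξ ω ∂μ) + ENNReal.ofReal (∫ ω, ξc ω ∂μ)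
          ≤ ∫⁻ ω, ENNReal.ofReal (N t ω) ∂μ + ENNReal.ofReal (∫ ω, ξc ω ∂μ) := by
        rw [← htotW]
        exact add_le_add_right hkeyuniv.2 _
      exact (ENNReal.add_le_add_iff_right hfinc).1 h1
    have hNint : Integrable (N t) μ := by
      refine ⟨hNtmeas.aestronglyMeasurable, ?_⟩
      rw [hasFiniteIntegral_iff_ofReal (Eventually.of_forall (hNnn t))]
      rw [htotN]
      exact ENNReal.ofReal_lt_top
    have hsetEq : ∀ B : Set Ω, MeasurableSet[F t] B →
        ∫ ω in B, N t ω ∂μ = ∫ ω in B, ξ ω ∂μ := by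
      intro B hB
      have hBm : MeasurableSet B := F.le t _ hB
      have hBc : MeasurableSet[F t] Bᶜ := hB.compl
      have h1 := (key B hB).1
      have h1c := (key Bᶜ hBc).1
      have hsplit : ∫⁻ ω in B, ENNReal.ofReal (N t ω) ∂μ
          + ∫⁻ ω in Bᶜ, ENNReal.ofReal (N t ω) ∂μ = ENNReal.ofReal (∫ ω, ξ ω ∂μ) := by
        rw [lintegral_add_compl _ hBm]
        exact htotN
      have hsplitr : ENNReal.ofReal (∫ ω in B, ξ ω ∂μ) + ENNReal.ofReal (∫ ω in Bᶜ, ξ ω ∂μ)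
          = ENNReal.ofReal (∫ ω, ξ ω ∂μ) := by
        rw [← ENNReal.ofReal_add (setIntegral_nonneg hBm fun ω _ => hξ0 ω)
          (setIntegral_nonneg hBm.compl fun ω _ => hξ0 ω)]
        congr 1
        exact integral_add_compl hBm hξ
      have h2 : ENNReal.ofReal (∫ ω in B, ξ ω ∂μ) ≤ ∫⁻ ω in B, ENNReal.ofReal (N t ω) ∂μ := by
        have h3 : ENNReal.ofReal (∫ ω in B, ξ ω ∂μ) + ENNReal.ofReal (∫ ω in Bᶜ, ξ ω ∂μ)
            ≤ ∫⁻ ω in B, ENNReal.ofReal (N t ω) ∂μ + ENNReal.ofReal (∫ ω in Bᶜ, ξ ω ∂μ) := by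
          rw [hsplitr, ← hsplit]
          exact add_le_add_right h1c _
        exact (ENNReal.add_le_add_iff_right ENNReal.ofReal_ne_top).1 h3
      have heq2 : ∫⁻ ω in B, ENNReal.ofReal (N t ω) ∂μ = ENNReal.ofReal (∫ ω in B, ξ ω ∂μ) :=
        le_antisymm h1 h2
      have h4 : ∫ ω in B, N t ω ∂μ = (∫⁻ ω in B, ENNReal.ofReal (N t ω) ∂μ).toReal := by
        rw [integral_eq_lintegral_of_nonneg_ae (Eventually.of_forall (hNnn t))
          hNtmeas.aestronglyMeasurable.restrict]
      rw [h4, heq2, ENNReal.toReal_ofReal (setIntegral_nonneg hBm fun ω _ => hξ0 ω)]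
    exact ae_eq_condExp_of_forall_setIntegral_eq (F.le t) hξ
      (fun s _ _ => hNint.integrableOn) (fun s hs _ => hsetEq s hs)
      ((hNmeas t).aestronglyMeasurable)
  -- conclusion
  refine ⟨N, hNnn, hNmeas, hNmod, ?_, ?_, fun t h ω => by simp only [hN, if_neg h]⟩
  · -- right continuity
    intro ω t ht htt ε hε
    by_cases hω : ω ∈ G
    · exact reg_right (g := fun q => M q ω) (h := fun s => N s ω) (t₀ := t₀)
        (fun s hs1 hs2 => hNtend ω hω s hs1 hs2) ht htt hε
    · refine ⟨t₀ - t, by linarith, by linarith, fun s h1 h2 => ?_⟩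
      rw [hNzero s ω hω, hNzero t ω hω]
      simp only [sub_zero, abs_zero]
      exact hε.le
  · -- left limits
    intro ω t ht htt
    by_cases hω : ω ∈ G
    · have hlq : ∃ L, Tendsto (fun q => M q ω) (lQ t) (𝓝 L) := by
        obtain ⟨hPos, hChain⟩ := hGP ω hω
        have hu0 : max 0 (t - 1) < t := by
          rcases le_or_gt t 1 with h | h
          · rw [max_eq_left (by linarith)]
            exact ht
          · rw [max_eq_right (by linarith)]
            linarith
        refine exists_llim ht (fun q h1 h2 => show q ∈ S from ⟨h1, lt_of_lt_of_le h2 htt⟩)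
          ?_ ?_ hChain
        · filter_upwards [eventually_lQ_mem hu0] with q hq
          exact (hPos q ⟨le_trans (le_max_left _ _) hq.1.le,
            lt_of_lt_of_le hq.2 htt⟩).1
        · obtain ⟨l, hl⟩ := hWll ω t ht
          have hWt : Tendsto (fun q : ℚ => W (q : ℝ) ω) (lQ t) (𝓝 l) := hl.comp tendsto_comap
          refine ⟨l + 1, ?_⟩
          have hev2 : ∀ᶠ q : ℚ in lQ t, W (q : ℝ) ω < l + 1 :=
            hWt.eventually_lt_const (by linarith)
          filter_upwards [hev2, eventually_lQ_mem hu0] with q h1 hq2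
          have h5 := hPos q ⟨le_trans (le_max_left _ _) hq2.1.le, lt_of_lt_of_le hq2.2 htt⟩
          linarith [h5.2.1, h5.2.2]
      obtain ⟨L, hL⟩ := hlq
      refine ⟨L, fun ε hε => ?_⟩
      obtain ⟨δ, h1, h2, h3⟩ := reg_left (g := fun q => M q ω) (h := fun s => N s ω) (t₀ := t₀)
        (fun s hs1 hs2 => hNtend ω hω s hs1 hs2) ht htt hL hε
      exact ⟨δ, h1, h2, h3⟩
    · refine ⟨0, fun ε hε => ⟨t, ht, le_rfl, fun s hs1 hs2 => ?_⟩⟩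
      rw [hNzero s ω hω]
      simp only [sub_zero, abs_zero]
      exact hε.le

end RegMain

/-- `Jproc μ F X t = E[∫_t^∞ X_s ds | F_t]`. -/
def Jproc (μ : Measure Ω) (F : Filtration ℝ mΩ) (X : ℝ → Ω → ℝ) (t : ℝ) : Ω → ℝ :=
  μ[(fun ω => ∫ s in Set.Ioi t, X s ω) | F t]

/-- `X =O Y`: there exist constants `k, K ∈ (0,∞)` with `kY ≤ X ≤ KY`
up to indistinguishability (on the relevant time range `t ≥ 0`). -/
def SameOrder (μ : Measure Ω) (X Y : ℝ → Ω → ℝ) : Prop :=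
  ∃ k K : ℝ, 0 < k ∧ 0 < K ∧
    ∀ᵐ ω ∂μ, ∀ t : ℝ, 0 ≤ t → k * Y t ω ≤ X t ω ∧ X t ω ≤ K * Y t ω

/-- The class `SO`. -/
def MemSO (μ : Measure Ω) (F : Filtration ℝ mΩ) (X : ℝ → Ω → ℝ) : Prop :=
  ProgMeasurable F X ∧ (∀ t : ℝ, 0 ≤ t → ∀ ω, 0 < X t ω) ∧
    (∫⁻ ω, (∫⁻ t in Set.Ioi (0 : ℝ), ENNReal.ofReal (X t ω)) ∂μ) < ⊤ ∧
    SameOrder μ X (Jproc μ F X)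

/-- The class `SO_ν`. -/
def MemSOnu (μ : Measure Ω) (F : Filtration ℝ mΩ) (ν : ℝ) (X : ℝ → Ω → ℝ) : Prop :=
  MemSO μ F X ∧ MemSO μ F (fun t ω => Real.exp (ν * t) * X t ω)

/-- The class `SO_+ = ∪_{ν>0} SO_ν`. -/
def MemSOplus (μ : Measure Ω) (F : Filtration ℝ mΩ) (X : ℝ → Ω → ℝ) : Prop :=
  ∃ ν : ℝ, 0 < ν ∧ MemSOnu μ F ν X

/-- A solution associated to `(h_EZ, U)` where `h_EZ(u,w) = u w^ρ`, `ρ = (θ-1)/θ`: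
a nonnegative progressively measurable càdlàg process `W` with
`E[∫_0^∞ U_s W_s^ρ ds] < ∞` and `W_t = E[∫_t^∞ U_s W_s^ρ ds | F_t]` a.s. for
all `t ≥ 0`. -/
def IsHEZSolution (μ : Measure Ω) (F : Filtration ℝ mΩ) (θ : ℝ)
    (U W : ℝ → Ω → ℝ) : Prop :=
  ProgMeasurable F W ∧ (∀ t ω, 0 ≤ W t ω) ∧
  (∀ ω, ∀ t : ℝ, 0 ≤ t → ContinuousWithinAt (fun s => W s ω) (Set.Ici t) t) ∧
  (∀ ω, ∀ t : ℝ, 0 < t → ∃ l : ℝ, Tendsto (fun s => W s ω) (𝓝[<] t) (𝓝 l)) ∧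
  (∫⁻ ω, (∫⁻ s in Set.Ioi (0 : ℝ),
      ENNReal.ofReal (U s ω * W s ω ^ ((θ - 1) / θ))) ∂μ) < ⊤ ∧
  ∀ t : ℝ, 0 ≤ t →
    W t =ᵐ[μ] μ[(fun ω => ∫ s in Set.Ioi t, U s ω * W s ω ^ ((θ - 1) / θ)) | F t]

/-- A maximal solution associated to `(h_EZ, U)`. -/
def IsMaximalHEZSolution (μ : Measure Ω) (F : Filtration ℝ mΩ) (θ : ℝ)
    (U W : ℝ → Ω → ℝ) : Prop :=
  IsHEZSolution μ F θ U W ∧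
  ∀ W' : ℝ → Ω → ℝ, IsHEZSolution μ F θ U W' →
    ∀ᵐ ω ∂μ, ∀ t : ℝ, 0 ≤ t → W' t ω ≤ W t ω

/-- if `W` is a solution associated to `(h_EZ, U)`, `U` vanishes
before time `t₀`, and `A ∈ F_{t₀}`, then (a version of) the process
`W̃_t = E[1_A · W_{t∨t₀} | F_t]` is a solution associated to `(h_EZ, Ũ)` where
`Ũ_t = E[1_A | F_t] · U_t`. -/
theorem statement15
    (μ : Measure Ω) [IsProbabilityMeasure μ] (F : Filtration ℝ mΩ)
    (hcomplete : ∀ s : Set Ω, μ s = 0 → ∀ t : ℝ, MeasurableSet[F t] s)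
    (htrivial : ∀ s : Set Ω, MeasurableSet[F 0] s → μ s = 0 ∨ μ s = 1)
    (hrightcts : ∀ t : ℝ,
      (F t : MeasurableSpace Ω) = ⨅ s ∈ Set.Ioi t, (F s : MeasurableSpace Ω))
    (hleftcts : ∀ t : ℝ, 0 < t →
      (F t : MeasurableSpace Ω) = ⨆ s ∈ Set.Ico 0 t, (F s : MeasurableSpace Ω))
    (θ : ℝ) (hθ : 1 < θ)
    (U : ℝ → Ω → ℝ) (hUmeas : ProgMeasurable F U) (hUnonneg : ∀ t ω, 0 ≤ U t ω)
    (W : ℝ → Ω → ℝ) (hW : IsHEZSolution μ F θ U W)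
    (t₀ : ℝ) (ht₀ : 0 ≤ t₀)
    (hU0 : ∀ t : ℝ, t < t₀ → ∀ ω, U t ω = 0)
    (A : Set Ω) (hA : MeasurableSet[F t₀] A) :
    ∃ Wtilde : ℝ → Ω → ℝ,
      (∀ t : ℝ, 0 ≤ t → Wtilde t =ᵐ[μ]
        μ[(fun ω => A.indicator (fun _ => (1 : ℝ)) ω * W (max t t₀) ω) | F t]) ∧
      IsHEZSolution μ F θ
        (fun t ω => (μ[A.indicator (fun _ => (1 : ℝ)) | F t]) ω * U t ω) Wtilde := by
  classical
  obtain ⟨hWpm, hWnn, hWrc, hWll, hW5, hW6⟩ := hW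
  set ρ : ℝ := (θ - 1) / θ with hρdef
  have hρpos : 0 < ρ := div_pos (by linarith) (by linarith)
  set χ : Ω → ℝ := A.indicator (fun _ => (1 : ℝ)) with hχ
  have hAt : ∀ t : ℝ, t₀ ≤ t → MeasurableSet[F t] A := fun t h => F.mono h _ hA
  have hAm : MeasurableSet A := F.le t₀ _ hA
  have hχmeas : ∀ t : ℝ, t₀ ≤ t → StronglyMeasurable[F t] χ :=
    fun t h => stronglyMeasurable_const.indicator (hAt t h)
  have hχ01 : ∀ ω, χ ω = 0 ∨ χ ω = 1 := by
    intro ω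
    by_cases h : ω ∈ A
    · right; simp [hχ, Set.indicator_of_mem h]
    · left; simp [hχ, Set.indicator_of_notMem h]
  have hχnn : ∀ ω, 0 ≤ χ ω := fun ω => by rcases hχ01 ω with h | h <;> simp [h]
  have hχbd : ∀ ω, ‖χ ω‖ ≤ 1 := fun ω => by
    rcases hχ01 ω with h | h <;> simp [h]
  have hχint : Integrable χ μ := (integrable_const (1 : ℝ)).indicator hAm
  have hDχ : ∀ t : ℝ, t₀ ≤ t → μ[χ|F t] = χ := fun t h =>
    condExp_of_stronglyMeasurable (F.le t) (hχmeas t h) hχint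
  -- joint measurability of the integrand
  set Φ : ℝ → Ω → ℝ := fun s ω => U s ω * W s ω ^ ρ with hΦ
  have hΦnn : ∀ s ω, 0 ≤ Φ s ω := fun s ω =>
    mul_nonneg (hUnonneg s ω) (Real.rpow_nonneg (hWnn s ω) _)
  have hΦzero : ∀ s : ℝ, s < t₀ → ∀ ω, Φ s ω = 0 := fun s h ω => by
    simp [hΦ, hU0 s h ω]
  have hΦjm : StronglyMeasurable (fun p : ℝ × Ω => Φ p.1 p.2) := by
    have h1 := ProgMeasurable.stronglyMeasurable_uncurry' hUmeas
    have h2 := ProgMeasurable.stronglyMeasurable_uncurry' hWpm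
    exact (h1.measurable.mul
      ((Real.continuous_rpow_const hρpos.le).measurable.comp h2.measurable)).stronglyMeasurable
  set Y : ℝ → Ω → ℝ := fun r ω => ∫ s in Set.Ioi r, Φ s ω with hY
  have hYsm : ∀ r : ℝ, StronglyMeasurable (Y r) := by
    intro r
    have h1 : StronglyMeasurable (fun p : Ω × ℝ => Φ p.2 p.1) :=
      hΦjm.comp_measurable measurable_swap
    exact h1.integral_prod_right'
  have hW5' : (∫⁻ ω, (∫⁻ s in Set.Ioi (0 : ℝ), ENNReal.ofReal (Φ s ω)) ∂μ) < ⊤ := hW5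
  have hlint : ∀ r : ℝ, 0 ≤ r →
      (∫⁻ ω, (∫⁻ s in Set.Ioi r, ENNReal.ofReal (Φ s ω)) ∂μ) < ⊤ := by
    intro r hr
    refine lt_of_le_of_lt (lintegral_mono fun ω => ?_) hW5'
    exact lintegral_mono_set (Set.Ioi_subset_Ioi hr)
  have hYint : ∀ r : ℝ, 0 ≤ r → Integrable (Y r) μ := by
    intro r hr
    refine ⟨(hYsm r).aestronglyMeasurable, ?_⟩
    refine lt_of_le_of_lt (lintegral_mono fun ω => ?_) (hlint r hr)
    refine le_trans (enorm_integral_le_lintegral_enorm _) (le_of_eq ?_)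
    refine lintegral_congr fun s => ?_
    exact Real.enorm_eq_ofReal (hΦnn s ω)
  have hYshift : ∀ t : ℝ, t ≤ t₀ → ∀ ω, Y t ω = Y t₀ ω := by
    intro t h ω
    have h1 : ∫ s in Set.Ioi t, Φ s ω
        = ∫ s in Set.Ioi t, (Set.Ioi t₀).indicator (fun s => Φ s ω) s := by
      refine setIntegral_congr_ae measurableSet_Ioi ?_
      have hne : ∀ᵐ s : ℝ, s ≠ t₀ := by
        refine ae_iff.2 ?_
        have : {s : ℝ | ¬s ≠ t₀} = {t₀} := by
          ext s; simp
        rw [this]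
        exact Real.volume_singleton
      filter_upwards [hne] with s hs _
      rcases lt_or_gt_of_ne hs with h3 | h3
      · rw [Set.indicator_of_notMem (by simp only [Set.mem_Ioi, not_lt]; exact h3.le),
          hΦzero s h3 ω]
      · exact (Set.indicator_of_mem (Set.mem_Ioi.2 h3) (fun s => Φ s ω)).symm
    rw [hY]
    simp only
    rw [h1, setIntegral_indicator measurableSet_Ioi, Set.Ioi_inter_Ioi, max_eq_right h]
  have hW6' : ∀ t : ℝ, 0 ≤ t → W t =ᵐ[μ] μ[Y t|F t] := fun t ht => hW6 t ht
  have hWmartY : ∀ t : ℝ, 0 ≤ t → t ≤ t₀ → W t =ᵐ[μ] μ[Y t₀|F t] := by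
    intro t h1 h2
    have h3 := hW6' t h1
    rwa [show Y t = Y t₀ from funext (hYshift t h2)] at h3
  -- ξ and the complementary variable
  set ξ : Ω → ℝ := fun ω => χ ω * W t₀ ω with hξdef
  set ξc : Ω → ℝ := fun ω => Aᶜ.indicator (fun _ => (1 : ℝ)) ω * W t₀ ω with hξcdef
  have hWt₀int : Integrable (W t₀) μ := integrable_condExp.congr (hWmartY t₀ ht₀ le_rfl).symm
  have hWint : ∀ t : ℝ, 0 ≤ t → Integrable (W t) μ := fun t ht =>
    integrable_condExp.congr (hW6' t ht).symm
  have hξint : Integrable ξ μ :=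
    hWt₀int.bdd_mul (c := 1) ((hχmeas t₀ le_rfl).mono (F.le t₀)).aestronglyMeasurable (Eventually.of_forall hχbd)
  have hξcint : Integrable ξc μ := by
    refine hWt₀int.bdd_mul (c := 1)
      (stronglyMeasurable_const.indicator hAm.compl).aestronglyMeasurable (Eventually.of_forall fun ω => ?_)
    by_cases h : ω ∈ Aᶜ
    · rw [Set.indicator_of_mem h]; simp
    · rw [Set.indicator_of_notMem h]; simp
  have hξ0 : ∀ ω, 0 ≤ ξ ω := fun ω => mul_nonneg (hχnn ω) (hWnn t₀ ω)
  have hξc0 : ∀ ω, 0 ≤ ξc ω := fun ω =>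
    mul_nonneg (Set.indicator_nonneg (fun _ _ => zero_le_one) ω) (hWnn t₀ ω)
  have hsum : ∀ ω, ξ ω + ξc ω = W t₀ ω := by
    intro ω
    by_cases h : ω ∈ A
    · simp [hξdef, hξcdef, hχ, Set.indicator_of_mem h,
        Set.indicator_of_notMem (Set.notMem_compl_iff.2 h)]
    · simp [hξdef, hξcdef, hχ, Set.indicator_of_notMem h,
        Set.indicator_of_mem (Set.mem_compl h)]
  have hWmart : ∀ t : ℝ, 0 ≤ t → t ≤ t₀ → W t =ᵐ[μ] μ[fun ω => ξ ω + ξc ω|F t] := by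
    intro t h1 h2
    have e0 : (fun ω => ξ ω + ξc ω) = W t₀ := funext hsum
    rw [e0]
    have e2 : μ[W t₀|F t] =ᵐ[μ] μ[Y t₀|F t] :=
      (condExp_congr_ae (hWmartY t₀ ht₀ le_rfl)).trans
        (condExp_condExp_of_le (F.mono h2) (F.le t₀))
    exact (hWmartY t h1 h2).trans e2.symm
  -- regularized version
  obtain ⟨N, hNnn, hNmeas, hNmod, hNrc, hNll, hNout⟩ :=
    reg_main μ F hcomplete hrightcts t₀ ξ ξc hξint hξcint hξ0 hξc0 W hWmart hWrc hWll
  set Wt : ℝ → Ω → ℝ := fun t ω => if t < t₀ then N t ω else χ ω * W t ω with hWt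
  have hWtval : ∀ t : ℝ, t₀ ≤ t → ∀ ω, Wt t ω = χ ω * W t ω := by
    intro t h ω
    simp only [hWt, if_neg (not_lt.2 h)]
  have hWtvalN : ∀ t : ℝ, t < t₀ → ∀ ω, Wt t ω = N t ω := by
    intro t h ω
    simp only [hWt, if_pos h]
  have hχWnn : ∀ t ω, 0 ≤ χ ω * W t ω := fun t ω => mul_nonneg (hχnn ω) (hWnn t ω)
  have hWtnn : ∀ t ω, 0 ≤ Wt t ω := by
    intro t ω
    rcases lt_or_ge t t₀ with h | h
    · rw [hWtvalN t h]; exact hNnn t ω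
    · rw [hWtval t h]; exact hχWnn t ω
  have hWtadapt : Adapted F Wt := by
    intro t
    rcases lt_or_ge t t₀ with h | h
    · have e : Wt t = N t := funext (hWtvalN t h)
      rw [e]; exact (hNmeas t).measurable
    · have e : Wt t = fun ω => χ ω * W t ω := funext (hWtval t h)
      rw [e]; exact ((hχmeas t h).mul (IsStronglyProgressive.stronglyAdapted hWpm t)).measurable
  -- right continuity (at every real time)
  have hWtrc : ∀ ω, ∀ t : ℝ, ContinuousWithinAt (fun s => Wt s ω) (Set.Ici t) t := by
    intro ω t
    rcases le_or_gt t₀ t with hge | hlt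
    · refine (continuousWithinAt_const.mul ((hWrc ω t (le_trans ht₀ hge)))).congr
        (fun s hs => hWtval s (le_trans hge hs) ω) (hWtval t hge ω)
    · rcases le_or_gt 0 t with ht0 | ht0
      · rw [Metric.continuousWithinAt_iff]
        intro ε hε
        obtain ⟨δ, hδ, hδ₀, hδ'⟩ := hNrc ω t ht0 hlt (ε / 2) (half_pos hε)
        refine ⟨δ, hδ, fun s hs hdist => ?_⟩
        rw [Real.dist_eq] at hdist
        have hs1 : t ≤ s := hs
        have hs2 : s < t + δ := by
          rw [abs_lt] at hdist
          linarith [hdist.1, hdist.2]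
        have hst₀ : s < t₀ := lt_of_lt_of_le hs2 hδ₀
        rw [Real.dist_eq, hWtvalN s hst₀, hWtvalN t hlt]
        calc |N s ω - N t ω| ≤ ε / 2 := hδ' s hs1 hs2
          _ < ε := by linarith
      · -- t < 0 : the process vanishes on [t, 0)
        have hmem : Set.Ico t 0 ∈ 𝓝[Set.Ici t] t :=
          Ico_mem_nhdsGE ht0
        have hzero : ∀ s ∈ Set.Ico t (0 : ℝ), Wt s ω = 0 := by
          intro s hs
          have hst₀ : s < t₀ := lt_of_lt_of_le hs.2 ht₀
          rw [hWtvalN s hst₀]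
          exact hNout s (fun hc => absurd hc.1 (not_le.2 hs.2)) ω
        refine (continuousWithinAt_const (b := (0 : ℝ))).congr_of_eventuallyEq ?_ ?_
        · exact Filter.eventuallyEq_of_mem hmem hzero
        · exact hzero t ⟨le_rfl, ht0⟩
  have hWtpm : ProgMeasurable F Wt :=
    adapted_progMeasurable_of_rightContinuous hWtadapt fun ω t => hWtrc ω t
  -- left limits
  have hWtll : ∀ ω, ∀ t : ℝ, 0 < t → ∃ l, Tendsto (fun s => Wt s ω) (𝓝[<] t) (𝓝 l) := by
    intro ω t ht
    rcases lt_or_ge t₀ t with hgt | hle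
    · obtain ⟨l, hl⟩ := hWll ω t ht
      refine ⟨χ ω * l, ?_⟩
      have h1 : Tendsto (fun s => χ ω * W s ω) (𝓝[<] t) (𝓝 (χ ω * l)) := hl.const_mul _
      refine h1.congr' ?_
      filter_upwards [Ioo_mem_nhdsLT_of_mem (show t ∈ Set.Ioc t₀ t from ⟨hgt, le_rfl⟩)] with s hs
      exact (hWtval s hs.1.le ω).symm
    · obtain ⟨L, hL⟩ := hNll ω t ht hle
      refine ⟨L, Metric.tendsto_nhds.2 fun ε hε => ?_⟩
      obtain ⟨δ, h1, h2, h3⟩ := hL (ε / 2) (half_pos hε)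
      filter_upwards [Ioo_mem_nhdsLT_of_mem (show t ∈ Set.Ioc (t - δ) t from ⟨by linarith, le_rfl⟩)] with s hs
      rw [Real.dist_eq, hWtvalN s (lt_of_lt_of_le hs.2 hle)]
      calc |N s ω - L| ≤ ε / 2 := h3 s hs.1 hs.2
        _ < ε := by linarith
  -- pointwise identities for the new generator
  have hint1 : ∀ t : ℝ, t₀ ≤ t → ∀ ω, ∀ s ∈ Set.Ioi t,
      (μ[χ|F s]) ω * U s ω * Wt s ω ^ ρ = χ ω * Φ s ω := by
    intro t ht ω s hs
    have hst₀ : t₀ ≤ s := le_trans ht (le_of_lt hs)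
    rw [hDχ s hst₀, hWtval s hst₀]
    by_cases h : ω ∈ A
    · simp only [hχ, Set.indicator_of_mem h, one_mul, hΦ]
    · simp [hχ, Set.indicator_of_notMem h, Real.zero_rpow hρpos.ne']
  have hint2 : ∀ t : ℝ, 0 ≤ t → t < t₀ → ∀ ω,
      (∫ s in Set.Ioi t, (μ[χ|F s]) ω * U s ω * Wt s ω ^ ρ) = χ ω * Y t₀ ω := by
    intro t ht htlt ω
    have h1 : ∫ s in Set.Ioi t, (μ[χ|F s]) ω * U s ω * Wt s ω ^ ρ
        = ∫ s in Set.Ioi t, (Set.Ioi t₀).indicator (fun s => χ ω * Φ s ω) s := by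
      refine setIntegral_congr_ae measurableSet_Ioi ?_
      have hne : ∀ᵐ s : ℝ, s ≠ t₀ := by
        refine ae_iff.2 ?_
        have : {s : ℝ | ¬s ≠ t₀} = {t₀} := by ext s; simp
        rw [this]
        exact Real.volume_singleton
      filter_upwards [hne] with s hsne hsmem
      rcases lt_or_gt_of_ne hsne with h3 | h3
      · rw [Set.indicator_of_notMem (by simp only [Set.mem_Ioi, not_lt]; exact h3.le),
          hU0 s h3 ω]
        ring
      · rw [Set.indicator_of_mem (Set.mem_Ioi.2 h3)]
        exact hint1 t₀ le_rfl ω s h3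
    rw [h1, setIntegral_indicator measurableSet_Ioi, Set.Ioi_inter_Ioi,
      max_eq_right htlt.le, integral_const_mul]
  have hint3 : ∀ t : ℝ, t₀ ≤ t → ∀ ω,
      (∫ s in Set.Ioi t, (μ[χ|F s]) ω * U s ω * Wt s ω ^ ρ) = χ ω * Y t ω := by
    intro t ht ω
    rw [setIntegral_congr_fun measurableSet_Ioi (fun s hs => hint1 t ht ω s hs),
      integral_const_mul]
  -- conditional expectation identities
  have hχYint : ∀ r : ℝ, 0 ≤ r → Integrable (fun ω => χ ω * Y r ω) μ := fun r hr =>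
    (hYint r hr).bdd_mul (c := 1) ((hχmeas t₀ le_rfl).mono (F.le t₀)).aestronglyMeasurable (Eventually.of_forall hχbd)
  have hpull : ∀ t : ℝ, t₀ ≤ t → ∀ r : ℝ, 0 ≤ r →
      μ[fun ω => χ ω * Y r ω|F t] =ᵐ[μ] fun ω => χ ω * (μ[Y r|F t]) ω := by
    intro t ht r hr
    have h1 := condExp_mul_of_stronglyMeasurable_left (μ := μ) (hχmeas t ht)
      (by exact hχYint r hr) (hYint r hr)
    exact h1
  have hξae : ξ =ᵐ[μ] μ[fun ω => χ ω * Y t₀ ω|F t₀] := by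
    have h2 : ξ =ᵐ[μ] fun ω => χ ω * (μ[Y t₀|F t₀]) ω := by
      filter_upwards [hWmartY t₀ ht₀ le_rfl] with ω h
      rw [hξdef]
      simp only
      rw [h]
    exact h2.trans (hpull t₀ le_rfl t₀ ht₀).symm
  -- the modification property in final form
  have hkey : ∀ t : ℝ, 0 ≤ t → t < t₀ →
      Wt t =ᵐ[μ] μ[fun ω => χ ω * Y t₀ ω|F t] := by
    intro t ht htlt
    have e0 : Wt t = N t := funext (hWtvalN t htlt)
    have e1 : μ[ξ|F t] =ᵐ[μ] μ[fun ω => χ ω * Y t₀ ω|F t] :=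
      (condExp_congr_ae hξae).trans (condExp_condExp_of_le (F.mono htlt.le) (F.le t₀))
    rw [e0]
    exact (hNmod t ht htlt).trans e1
  have hkey2 : ∀ t : ℝ, t₀ ≤ t → 0 ≤ t →
      Wt t =ᵐ[μ] μ[fun ω => χ ω * Y t ω|F t] := by
    intro t ht h0
    have e1 : μ[fun ω => χ ω * Y t ω|F t] =ᵐ[μ] fun ω => χ ω * (μ[Y t|F t]) ω :=
      hpull t ht t h0
    have e2 : (fun ω => χ ω * (μ[Y t|F t]) ω) =ᵐ[μ] Wt t := by
      filter_upwards [hW6' t h0] with ω h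
      rw [hWtval t ht ω, h]
    exact (e1.trans e2).symm
  refine ⟨Wt, ?_, ?_, ?_, ?_, ?_, ?_, ?_⟩
  · -- first bullet
    intro t ht
    rcases lt_or_ge t t₀ with hlt | hge
    · rw [max_eq_right hlt.le]
      have e2 : (fun ω => χ ω * W t₀ ω) = ξ := rfl
      rw [e2]
      have e0 : Wt t = N t := funext (hWtvalN t hlt)
      rw [e0]
      exact hNmod t ht hlt
    · rw [max_eq_left hge]
      have e1 : μ[fun ω => χ ω * W t ω|F t] = fun ω => χ ω * W t ω :=
        condExp_of_stronglyMeasurable (F.le t)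
          ((hχmeas t hge).mul (IsStronglyProgressive.stronglyAdapted hWpm t))
          ((hWint t ht).bdd_mul
            (c := 1) ((hχmeas t₀ le_rfl).mono (F.le t₀)).aestronglyMeasurable (Eventually.of_forall hχbd))
      rw [e1]
      exact Filter.EventuallyEq.of_eq (funext (hWtval t hge))
  · exact hWtpm
  · exact hWtnn
  · exact fun ω t _ => hWtrc ω t
  · exact fun ω t ht => hWtll ω t ht
  · -- integrability of the generator pairing
    beta_reduce
    refine lt_of_le_of_lt (lintegral_mono fun ω => lintegral_mono fun s => ?_) hW5'
    refine ENNReal.ofReal_le_ofReal ?_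
    rcases lt_or_ge s t₀ with h | h
    · rw [hU0 s h ω]
      have : (μ[χ|F s]) ω * 0 * Wt s ω ^ ρ = 0 := by ring
      rw [this]
      exact hΦnn s ω
    · rw [hDχ s h, hWtval s h]
      by_cases hmem : ω ∈ A
      · simp only [hχ, Set.indicator_of_mem hmem, one_mul]
        exact le_rfl
      · simp only [hχ, Set.indicator_of_notMem hmem, zero_mul, Real.zero_rpow hρpos.ne',
          mul_zero]
        exact hΦnn s ω
  · -- the fixed point property
    intro t ht
    beta_reduce
    rcases lt_or_ge t t₀ with hlt | hge
    · have e1 : (fun ω => ∫ s in Set.Ioi t, (μ[χ|F s]) ω * U s ω * Wt s ω ^ ρ)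
          = fun ω => χ ω * Y t₀ ω := funext (hint2 t ht hlt)
      rw [e1]
      exact hkey t ht hlt
    · have e1 : (fun ω => ∫ s in Set.Ioi t, (μ[χ|F s]) ω * U s ω * Wt s ω ^ ρ)
          = fun ω => χ ω * Y t ω := funext (hint3 t hge)
      rw [e1]
      exact hkey2 t hge ht
end
end

section
/- Let (Ω, G, P) be a probability space and (X_n)_{n∈ℕ} a sequence of random variables with |X_n| ≤ Y for all n, where Y is integrable. Let (G_n)_{n∈ℕ} be an increasing family of sub-σ-algebras of G and let G_∞ be the σ-algebra generated by ∪_{n=1}^∞ G_n. Then limsup_{n→∞} E[X_n | G_n] ≤ E[ limsup_{n→∞} X_n | G_∞ ] P-almost surely. -/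
open MeasureTheory Filter Set Real Topology ENNReal

noncomputable section

/-- a variant of Hunt's lemma / reverse Fatou: if `(X_n)` is a
sequence of random variables dominated in absolute value by an integrable `Y`,
and `(G_n)` is an increasing family of sub-σ-algebras with `G_∞ = σ(∪_n G_n)`,
then `limsup_n E[X_n | G_n] ≤ E[limsup_n X_n | G_∞]` almost surely. -/
theorem statement19
    {Ω : Type*} {mΩ : MeasurableSpace Ω}
    (μ : Measure Ω) [IsProbabilityMeasure μ]
    (X : ℕ → Ω → ℝ) (hXmeas : ∀ n, AEStronglyMeasurable (X n) μ)
    (Y : Ω → ℝ) (hY : Integrable Y μ)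
    (hbound : ∀ n, ∀ᵐ ω ∂μ, |X n ω| ≤ Y ω)
    (G : ℕ → MeasurableSpace Ω) (hGmono : Monotone G)
    (hGle : ∀ n, G n ≤ mΩ) :
    ∀ᵐ ω ∂μ,
      Filter.limsup (fun n => (μ[X n | G n]) ω) Filter.atTop ≤
        (μ[(fun ω' => Filter.limsup (fun n => X n ω') Filter.atTop) | ⨆ n, G n]) ω := by
  classical
  -- strongly measurable versions of the `X n`
  set X' : ℕ → Ω → ℝ := fun n => (hXmeas n).mk (X n) with hX'def
  have hX'meas : ∀ n, StronglyMeasurable (X' n) := fun n => (hXmeas n).stronglyMeasurable_mk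
  have hX'ae : ∀ᵐ ω ∂μ, ∀ n, X n ω = X' n ω := by
    rw [ae_all_iff]; exact fun n => (hXmeas n).ae_eq_mk
  have hbd : ∀ᵐ ω ∂μ, ∀ n, |X' n ω| ≤ Y ω := by
    rw [ae_all_iff]; intro n
    filter_upwards [hbound n, (hXmeas n).ae_eq_mk] with ω h1 h2
    rw [h2] at h1; exact h1
  -- the filtration
  let ℱ : Filtration ℕ mΩ := ⟨G, hGmono, hGle⟩
  have hℱ : ∀ n, (ℱ n : MeasurableSpace Ω) = G n := fun n => rfl
  have hℱsup : (⨆ n, (ℱ n : MeasurableSpace Ω)) = ⨆ n, G n := rfl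
  -- the running suprema
  set Z : ℕ → Ω → ℝ := fun m ω => ⨆ k, X' (m + k) ω with hZdef
  have hZmeas : ∀ m, Measurable (Z m) := fun m =>
    Measurable.iSup fun k => (hX'meas (m + k)).measurable
  set Lstar : Ω → ℝ := fun ω => ⨅ m, Z m ω with hLdef
  have hLmeas : Measurable Lstar := Measurable.iInf fun m => hZmeas m
  -- pointwise facts on the good set
  have hZfacts : ∀ᵐ ω ∂μ, (∀ m, -Y ω ≤ Z m ω ∧ Z m ω ≤ Y ω) ∧
      (Antitone fun m => Z m ω) ∧
      (∀ m n, m ≤ n → X' n ω ≤ Z m ω) ∧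
      Lstar ω = Filter.limsup (fun n => X' n ω) Filter.atTop := by
    filter_upwards [hbd] with ω hω
    have hbdd : ∀ m, BddAbove (range fun k => X' (m + k) ω) := by
      intro m
      exact ⟨Y ω, by rintro x ⟨k, rfl⟩; exact (abs_le.1 (hω (m + k))).2⟩
    have hZle : ∀ m, Z m ω ≤ Y ω := fun m =>
      ciSup_le fun k => (abs_le.1 (hω (m + k))).2
    have hZge : ∀ m, -Y ω ≤ Z m ω := by
      intro m
      refine le_trans (abs_le.1 (hω m)).1 ?_
      have := le_ciSup (hbdd m) 0
      simpa using this
    have hle : ∀ m n, m ≤ n → X' n ω ≤ Z m ω := by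
      intro m n hmn
      have := le_ciSup (hbdd m) (n - m)
      rwa [Nat.add_sub_cancel' hmn] at this
    have hanti : Antitone fun m => Z m ω := by
      refine antitone_nat_of_succ_le fun m => ?_
      refine ciSup_le fun k => ?_
      have := le_ciSup (hbdd m) (k + 1)
      rwa [show m + (k + 1) = m + 1 + k by ring] at this
    refine ⟨fun m => ⟨hZge m, hZle m⟩, hanti, hle, ?_⟩
    -- Lstar = limsup X'
    have hbddB : BddBelow (range fun m => Z m ω) :=
      ⟨-Y ω, by rintro x ⟨m, rfl⟩; exact hZge m⟩
    rw [Filter.limsup_eq]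
    refine le_antisymm ?_ ?_
    · refine le_csInf ⟨Y ω, Filter.Eventually.of_forall fun n => (abs_le.1 (hω n)).2⟩ ?_
      intro a ha
      obtain ⟨m, hm⟩ := (eventually_atTop).1 ha
      refine ciInf_le_of_le hbddB m (ciSup_le fun k => hm (m + k) (Nat.le_add_right m k))
    · refine le_ciInf fun m => ?_
      refine csInf_le ⟨-Y ω, fun x hx => ?_⟩ ?_
      · obtain ⟨n, hn⟩ := eventually_atTop.1 hx
        exact le_trans (abs_le.1 (hω n)).1 (hn n le_rfl)
      · exact eventually_atTop.2 ⟨m, fun n hn => hle m n hn⟩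
  -- integrability
  have hXint : ∀ n, Integrable (X n) μ := fun n =>
    hY.mono (hXmeas n) <| by
      filter_upwards [hbound n] with ω h using h.trans (le_abs_self _)
  have hZint : ∀ m, Integrable (Z m) μ := fun m =>
    hY.mono (hZmeas m).aestronglyMeasurable <| by
      filter_upwards [hZfacts] with ω h
      exact (abs_le.2 ⟨(h.1 m).1, (h.1 m).2⟩).trans (le_abs_self _)
  have hLint : Integrable Lstar μ :=
    hY.mono hLmeas.aestronglyMeasurable <| by
      filter_upwards [hZfacts] with ω h
      have hbddB : BddBelow (range fun m => Z m ω) :=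
        ⟨-Y ω, by rintro x ⟨m, rfl⟩; exact (h.1 m).1⟩
      have h1 : Lstar ω ≤ Y ω := (ciInf_le hbddB 0).trans (h.1 0).2
      have h2 : -Y ω ≤ Lstar ω := le_ciInf fun m => (h.1 m).1
      exact (abs_le.2 ⟨h2, h1⟩).trans (le_abs_self _)
  -- Lévy upward for each Z m
  have hlev : ∀ᵐ ω ∂μ, ∀ m, Tendsto (fun n => (μ[Z m|G n]) ω) atTop
      (𝓝 ((μ[Z m|⨆ n, G n]) ω)) := by
    rw [ae_all_iff]
    intro m
    exact MeasureTheory.tendsto_ae_condExp (μ := μ) (ℱ := ℱ) (Z m)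
  -- Lévy upward for -Y (for coboundedness)
  have hlevY : ∀ᵐ ω ∂μ, Tendsto (fun n => (μ[(fun ω' => -Y ω')|G n]) ω) atTop
      (𝓝 ((μ[(fun ω' => -Y ω')|⨆ n, G n]) ω)) :=
    MeasureTheory.tendsto_ae_condExp (μ := μ) (ℱ := ℱ) _
  -- conditional expectation monotonicity facts
  have hmono : ∀ᵐ ω ∂μ, ∀ m n, m ≤ n → (μ[X n|G n]) ω ≤ (μ[Z m|G n]) ω := by
    rw [ae_all_iff]; intro m; rw [ae_all_iff]; intro n
    rcases le_or_gt m n with hmn | hmn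
    · have : X n ≤ᵐ[μ] Z m := by
        filter_upwards [hZfacts, hX'ae] with ω h he
        rw [he n]; exact h.2.2.1 m n hmn
      filter_upwards [condExp_mono (hXint n) (hZint m) this] with ω h
      exact fun _ => h
    · exact Filter.Eventually.of_forall fun ω h => absurd h (not_le.2 hmn)
  have hlow : ∀ᵐ ω ∂μ, ∀ n, (μ[(fun ω' => -Y ω')|G n]) ω ≤ (μ[X n|G n]) ω := by
    rw [ae_all_iff]; intro n
    refine condExp_mono hY.neg (hXint n) ?_
    filter_upwards [hbound n] with ω h
    exact (abs_le.1 h).1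
  -- L¹ convergence of μ[Z m | G∞] to μ[Lstar | G∞], extract a.e. subsequence
  have hL1 : Tendsto (fun m => eLpNorm (μ[Z m|⨆ n, G n] - μ[Lstar|⨆ n, G n]) 1 μ)
      atTop (𝓝 0) := by
    have hdom : Tendsto (fun m => eLpNorm (Z m - Lstar) 1 μ) atTop (𝓝 0) := by
      simp_rw [eLpNorm_one_eq_lintegral_enorm]
      have h0 : (0 : ℝ≥0∞) = ∫⁻ _ω, 0 ∂μ := by simp
      rw [h0]
      refine tendsto_lintegral_of_dominated_convergence
        (fun ω => 2 * (‖Y ω‖₊ : ℝ≥0∞)) (fun m => ?_) (fun m => ?_) ?_ ?_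
      · exact ((hZmeas m).sub hLmeas).nnnorm.coe_nnreal_ennreal
      · filter_upwards [hZfacts] with ω h
        have hbddB : BddBelow (range fun m => Z m ω) :=
          ⟨-Y ω, by rintro x ⟨m', rfl⟩; exact (h.1 m').1⟩
        have h1 : |Z m ω| ≤ Y ω := abs_le.2 ⟨(h.1 m).1, (h.1 m).2⟩
        have h2 : |Lstar ω| ≤ Y ω :=
          abs_le.2 ⟨le_ciInf fun m' => (h.1 m').1, (ciInf_le hbddB 0).trans (h.1 0).2⟩
        have : ‖Z m ω - Lstar ω‖₊ ≤ 2 * ‖Y ω‖₊ := by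
          have : |Z m ω - Lstar ω| ≤ 2 * |Y ω| := by
            calc |Z m ω - Lstar ω| ≤ |Z m ω| + |Lstar ω| := abs_sub _ _
            _ ≤ Y ω + Y ω := add_le_add h1 h2
            _ ≤ 2 * |Y ω| := by rw [two_mul]; exact add_le_add (le_abs_self _) (le_abs_self _)
          simpa [← NNReal.coe_le_coe, Real.nnnorm_abs] using this
        exact_mod_cast ENNReal.coe_le_coe.2 this
      · have hfin : ∫⁻ a, (‖Y a‖₊ : ℝ≥0∞) ∂μ < ⊤ := hY.2
        simp_rw [lintegral_const_mul' _ _ (by norm_num : (2 : ℝ≥0∞) ≠ ∞)]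
        exact ENNReal.mul_ne_top (by norm_num) hfin.ne
      · filter_upwards [hZfacts] with ω h
        have hbddB : BddBelow (range fun m => Z m ω) :=
          ⟨-Y ω, by rintro x ⟨m', rfl⟩; exact (h.1 m').1⟩
        have ht : Tendsto (fun m => Z m ω) atTop (𝓝 (Lstar ω)) :=
          tendsto_atTop_ciInf h.2.1 hbddB
        have h2 : Tendsto (fun m => ‖Z m ω - Lstar ω‖₊) atTop (𝓝 ‖Lstar ω - Lstar ω‖₊) :=
          Filter.Tendsto.nnnorm (f := fun m => Z m ω - Lstar ω) (ht.sub tendsto_const_nhds)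
        rw [sub_self, nnnorm_zero] at h2
        exact ENNReal.tendsto_coe.2 h2
    have hbound' : ∀ m, eLpNorm (μ[Z m|⨆ n, G n] - μ[Lstar|⨆ n, G n]) 1 μ ≤
        eLpNorm (Z m - Lstar) 1 μ := by
      intro m
      have h1 : μ[Z m|⨆ n, G n] - μ[Lstar|⨆ n, G n] =ᵐ[μ] μ[Z m - Lstar|⨆ n, G n] :=
        (condExp_sub (hZint m) hLint _).symm
      rw [eLpNorm_congr_ae h1]
      exact eLpNorm_one_condExp_le_eLpNorm _
    exact tendsto_of_tendsto_of_tendsto_of_le_of_le tendsto_const_nhds hdom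
      (fun m => zero_le) hbound'
  obtain ⟨ns, hns, hae⟩ :=
    (tendstoInMeasure_of_tendsto_eLpNorm (p := 1) one_ne_zero
      (fun m => stronglyMeasurable_condExp.mono (iSup_le hGle) |>.aestronglyMeasurable)
      (stronglyMeasurable_condExp.mono (iSup_le hGle)).aestronglyMeasurable
      hL1).exists_seq_tendsto_ae
  -- identify Lstar with the limsup of the original sequence
  have hcongr : μ[Lstar|⨆ n, G n] =ᵐ[μ]
      μ[(fun ω' => Filter.limsup (fun n => X n ω') Filter.atTop)|⨆ n, G n] := by
    refine condExp_congr_ae ?_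
    filter_upwards [hZfacts, hX'ae] with ω h he
    rw [h.2.2.2]
    congr 1
    funext n
    exact (he n).symm
  -- put everything together
  filter_upwards [hlev, hlevY, hmono, hlow, hae, hcongr] with ω h1 h2 h3 h4 h5 h6
  rw [← h6]
  have hco : IsCoboundedUnder (· ≤ ·) atTop (fun n => (μ[X n|G n]) ω) := by
    obtain ⟨b, hb⟩ := h2.isBoundedUnder_ge
    refine isCoboundedUnder_le_of_eventually_le atTop (x := b) ?_
    filter_upwards [hb] with n hn
    exact le_trans hn (h4 n)
  have key : ∀ m, Filter.limsup (fun n => (μ[X n|G n]) ω) Filter.atTop ≤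
      (μ[Z m|⨆ n, G n]) ω := by
    intro m
    have hb : IsBoundedUnder (· ≤ ·) atTop (fun n => (μ[Z m|G n]) ω) :=
      (h1 m).isBoundedUnder_le
    calc Filter.limsup (fun n => (μ[X n|G n]) ω) Filter.atTop
        ≤ Filter.limsup (fun n => (μ[Z m|G n]) ω) Filter.atTop := by
          refine limsup_le_limsup ?_ hco hb
          exact eventually_atTop.2 ⟨m, fun n hn => h3 m n hn⟩
      _ = (μ[Z m|⨆ n, G n]) ω := (h1 m).limsup_eq
  exact ge_of_tendsto' h5 fun k => key (ns k)
end
end
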